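/- arXiv:0711.3764 — 6 statements merged into one kernel-verified Lean document; each statement's English description precedes it below -/
import Mathlib

section
/- Let α be a probability measure on a measurable space S and let u₀, u₁ : S → ℝ be bounded measurable functions. For j = 0, 1 let h_j = exp(u_j) / ∫ exp(u_j) dα be the density with respect to α of the tilted probability measure. Then for every real number B, ∫ |h₁ − h₀| dα ≤ 2 · exp( max(osc(u₀), osc(u₁)) ) · ∫ |u₁ − u₀ − B| dα. -/
open MeasureTheory Real

private theorem abs_exp_sub_exp' (a b : ℝ) (h : a ≤ b) :
    |Real.exp a - Real.exp b| ≤ Real.exp (max a b) * |a - b| := by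
  rw [max_eq_right h, abs_of_nonpos (by simp [Real.exp_le_exp, h]),
    abs_of_nonpos (by linarith)]
  have h1 : (a - b) + 1 ≤ Real.exp (a - b) := Real.add_one_le_exp _
  have h2 : Real.exp (a - b) * Real.exp b = Real.exp a := by
    rw [← Real.exp_add]; ring_nf
  nlinarith [mul_le_mul_of_nonneg_right h1 (Real.exp_pos b).le]

private theorem abs_exp_sub_exp (a b : ℝ) :
    |Real.exp a - Real.exp b| ≤ Real.exp (max a b) * |a - b| := by
  rcases le_total a b with h | h
  · exact abs_exp_sub_exp' a b h
  · rw [abs_sub_comm, abs_sub_comm a b, max_comm]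
    exact abs_exp_sub_exp' b a h

private theorem tilt_L1_helper {S : Type*} [MeasurableSpace S] (α : Measure S)
    [IsProbabilityMeasure α] (f g : S → ℝ)
    (hf : Integrable (fun x => Real.exp (f x)) α) (hg : Integrable (fun x => Real.exp (g x)) α)
    (hZf : 0 < ∫ y, Real.exp (f y) ∂α) (hZg : 0 < ∫ y, Real.exp (g y) ∂α) :
    ∫ x, |Real.exp (f x) / (∫ y, Real.exp (f y) ∂α)
           - Real.exp (g x) / (∫ y, Real.exp (g y) ∂α)| ∂α
      ≤ (2 / ∫ y, Real.exp (f y) ∂α) * ∫ x, |Real.exp (f x) - Real.exp (g x)| ∂α := by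
  set Zf := ∫ y, Real.exp (f y) ∂α with hZfdef
  set Zg := ∫ y, Real.exp (g y) ∂α with hZgdef
  set D := ∫ x, |Real.exp (f x) - Real.exp (g x)| ∂α with hDdef
  have hD0 : 0 ≤ D := integral_nonneg fun x => abs_nonneg _
  have hZfg : |Zf - Zg| ≤ D := by
    have h := norm_integral_le_integral_norm (μ := α) (fun x => Real.exp (f x) - Real.exp (g x))
    rw [integral_sub hf hg] at h
    simpa [Real.norm_eq_abs] using h
  set c : ℝ := |Zf - Zg| / (Zf * Zg) with hc
  have hpt : ∀ x, |Real.exp (f x) / Zf - Real.exp (g x) / Zg|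
      ≤ (1 / Zf) * |Real.exp (f x) - Real.exp (g x)| + c * Real.exp (g x) := by
    intro x
    have heq : Real.exp (f x) / Zf - Real.exp (g x) / Zg
        = (Real.exp (f x) - Real.exp (g x)) / Zf
          + Real.exp (g x) * (Zg - Zf) / (Zf * Zg) := by
      field_simp
      ring
    rw [heq]
    refine (abs_add_le _ _).trans ?_
    rw [abs_div, abs_of_pos hZf, abs_div, abs_mul, abs_of_pos (Real.exp_pos _),
      abs_of_pos (mul_pos hZf hZg), abs_sub_comm Zg Zf]
    have : Real.exp (g x) * |Zf - Zg| / (Zf * Zg) = c * Real.exp (g x) := by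
      rw [hc]; ring
    rw [this, div_eq_mul_inv, one_div, mul_comm]
  have habs : Integrable (fun x => |Real.exp (f x) - Real.exp (g x)|) α := (hf.sub hg).abs
  have hint : Integrable (fun x => (1 / Zf) * |Real.exp (f x) - Real.exp (g x)|
      + c * Real.exp (g x)) α :=
    (habs.const_mul _).add (hg.const_mul _)
  calc ∫ x, |Real.exp (f x) / Zf - Real.exp (g x) / Zg| ∂α
      ≤ ∫ x, ((1 / Zf) * |Real.exp (f x) - Real.exp (g x)| + c * Real.exp (g x)) ∂α :=
        integral_mono_of_nonneg (ae_of_all _ fun x => abs_nonneg _) hint (ae_of_all _ hpt)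
    _ = (1 / Zf) * D + c * Zg := by
        rw [integral_add (habs.const_mul _) (hg.const_mul _),
          integral_const_mul, integral_const_mul]
    _ ≤ (1 / Zf) * D + (D / (Zf * Zg)) * Zg := by
        have h1 : c ≤ D / (Zf * Zg) := by rw [hc]; gcongr
        exact add_le_add (le_refl _) (mul_le_mul_of_nonneg_right h1 hZg.le)
    _ = (2 / Zf) * D := by field_simp; ring

/-- Linear-deviation tilting estimate: for two bounded measurable functions `u₀, u₁` on a
probability space `(S, α)`, the total variation distance between the exponentially tilted
probability densities `h_j = exp(u_j)/∫ exp(u_j) dα` is bounded, for every `B : ℝ`, by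
`2 · exp(max(osc u₀, osc u₁)) · ∫ |u₁ − u₀ − B| dα`. -/
theorem tilted_density_L1_dist_le_linear_deviation
    {S : Type*} [MeasurableSpace S] (α : Measure S) [IsProbabilityMeasure α]
    (u₀ u₁ : S → ℝ) (hm₀ : Measurable u₀) (hm₁ : Measurable u₁)
    (C₀ : ℝ) (hb₀ : ∀ x, |u₀ x| ≤ C₀) (C₁ : ℝ) (hb₁ : ∀ x, |u₁ x| ≤ C₁)
    (B : ℝ) :
    ∫ σ, |Real.exp (u₁ σ) / (∫ τ, Real.exp (u₁ τ) ∂α)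
          - Real.exp (u₀ σ) / (∫ τ, Real.exp (u₀ τ) ∂α)| ∂α
      ≤ 2 * Real.exp (max ((⨆ x, u₀ x) - ⨅ x, u₀ x) ((⨆ x, u₁ x) - ⨅ x, u₁ x))
          * ∫ σ, |u₁ σ - u₀ σ - B| ∂α := by
  -- notation
  set M : ℝ := max ((⨆ x, u₀ x) - ⨅ x, u₀ x) ((⨆ x, u₁ x) - ⨅ x, u₁ x) with hM
  set v : S → ℝ := fun x => u₁ x - B with hv
  -- nonemptiness
  have hne : Nonempty S := by
    by_contra h
    have h1 : α Set.univ = 1 := measure_univ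
    rw [Set.univ_eq_empty_iff.2 (not_nonempty_iff.1 h)] at h1
    simp at h1
  -- boundedness of ranges
  have hA₀ : BddAbove (Set.range u₀) := ⟨C₀, by rintro y ⟨x, rfl⟩; exact (abs_le.1 (hb₀ x)).2⟩
  have hB₀ : BddBelow (Set.range u₀) := ⟨-C₀, by rintro y ⟨x, rfl⟩; exact (abs_le.1 (hb₀ x)).1⟩
  have hA₁ : BddAbove (Set.range u₁) := ⟨C₁, by rintro y ⟨x, rfl⟩; exact (abs_le.1 (hb₁ x)).2⟩
  have hB₁ : BddBelow (Set.range u₁) := ⟨-C₁, by rintro y ⟨x, rfl⟩; exact (abs_le.1 (hb₁ x)).1⟩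
  -- integrability
  have I_ev : Integrable (fun x => Real.exp (v x)) α := by
    refine Integrable.mono' (integrable_const (Real.exp (C₁ + |B|)))
      ((Real.measurable_exp.comp (hm₁.sub measurable_const)).aestronglyMeasurable)
      (ae_of_all _ fun x => ?_)
    rw [Real.norm_eq_abs, abs_of_pos (Real.exp_pos _)]
    exact Real.exp_le_exp.2 (by
      have h1 := (abs_le.1 (hb₁ x)).2
      have h2 := neg_abs_le B
      simp only [hv]; linarith)
  have I_e0 : Integrable (fun x => Real.exp (u₀ x)) α := by
    refine Integrable.mono' (integrable_const (Real.exp C₀))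
      ((Real.measurable_exp.comp hm₀).aestronglyMeasurable)
      (ae_of_all _ fun x => ?_)
    rw [Real.norm_eq_abs, abs_of_pos (Real.exp_pos _)]
    exact Real.exp_le_exp.2 (abs_le.1 (hb₀ x)).2
  have I_d : Integrable (fun x => |u₁ x - u₀ x - B|) α := by
    refine Integrable.mono' (integrable_const (C₁ + C₀ + |B|))
      (((hm₁.sub hm₀).sub measurable_const).abs.aestronglyMeasurable)
      (ae_of_all _ fun x => ?_)
    rw [Real.norm_eq_abs, abs_abs]
    have h1 := abs_le.1 (hb₁ x); have h0 := abs_le.1 (hb₀ x)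
    have h2 := neg_abs_le B; have h3 := le_abs_self B
    exact abs_le.2 ⟨by linarith, by linarith⟩
  -- positivity of the normalizers
  set Zv := ∫ τ, Real.exp (v τ) ∂α with hZv
  set Z₀ := ∫ τ, Real.exp (u₀ τ) ∂α with hZ₀
  have hZvpos : 0 < Zv := integral_exp_pos I_ev
  have hZ₀pos : 0 < Z₀ := integral_exp_pos I_e0
  -- rewrite the tilted density of u₁ in terms of v
  have hZ1 : (∫ τ, Real.exp (u₁ τ) ∂α) = Zv * Real.exp B := by
    rw [hZv, ← integral_mul_const]
    congr 1; funext τ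
    rw [← Real.exp_add]; congr 1; simp [hv]
  have hrw : ∀ σ, Real.exp (u₁ σ) / (∫ τ, Real.exp (u₁ τ) ∂α) = Real.exp (v σ) / Zv := by
    intro σ
    rw [hZ1, show Real.exp (u₁ σ) = Real.exp (v σ) * Real.exp B by
      rw [← Real.exp_add]; congr 1; simp [hv]]
    exact mul_div_mul_right _ _ (Real.exp_ne_zero B)
  -- lower bounds on the normalizers
  have hZv_lb : Real.exp ((⨅ x, u₁ x) - B) ≤ Zv := by
    have h := integral_mono (μ := α) (integrable_const (Real.exp ((⨅ x, u₁ x) - B))) I_ev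
      (fun x => Real.exp_le_exp.2 (by have := ciInf_le hB₁ x; simp only [hv]; linarith))
    simpa using h
  have hZ0_lb : Real.exp (⨅ x, u₀ x) ≤ Z₀ := by
    have h := integral_mono (μ := α) (integrable_const (Real.exp (⨅ x, u₀ x))) I_e0
      (fun x => Real.exp_le_exp.2 (ciInf_le hB₀ x))
    simpa using h
  -- density upper bounds
  have hv_ub : ∀ x, Real.exp (v x) / Zv ≤ Real.exp M := by
    intro x
    have h1 : Real.exp (v x) / Zv ≤ Real.exp ((⨆ x, u₁ x) - B) / Real.exp ((⨅ x, u₁ x) - B) :=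
      div_le_div₀ (Real.exp_pos _).le
        (Real.exp_le_exp.2 (by have := le_ciSup hA₁ x; simp only [hv]; linarith))
        (Real.exp_pos _) hZv_lb
    refine h1.trans ?_
    rw [← Real.exp_sub]
    exact Real.exp_le_exp.2 (by rw [hM]; refine le_trans (le_of_eq (by ring)) (le_max_right _ _))
  have h0_ub : ∀ x, Real.exp (u₀ x) / Z₀ ≤ Real.exp M := by
    intro x
    have h1 : Real.exp (u₀ x) / Z₀ ≤ Real.exp (⨆ x, u₀ x) / Real.exp (⨅ x, u₀ x) :=
      div_le_div₀ (Real.exp_pos _).le (Real.exp_le_exp.2 (le_ciSup hA₀ x))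
        (Real.exp_pos _) hZ0_lb
    refine h1.trans ?_
    rw [← Real.exp_sub]
    exact Real.exp_le_exp.2 (by rw [hM]; exact le_max_left _ _)
  -- the L¹ distance between exponentials
  set D := ∫ x, |Real.exp (v x) - Real.exp (u₀ x)| ∂α with hD
  -- the key step
  have key : ∀ Z : ℝ, 0 < Z → (∀ x, Real.exp (v x) / Z ≤ Real.exp M) →
      (∀ x, Real.exp (u₀ x) / Z ≤ Real.exp M) →
      (2 / Z) * D ≤ 2 * Real.exp M * ∫ σ, |u₁ σ - u₀ σ - B| ∂α := by
    intro Z hZ hbv hb0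
    have hpt : ∀ x, (2 / Z) * |Real.exp (v x) - Real.exp (u₀ x)|
        ≤ 2 * Real.exp M * |u₁ x - u₀ x - B| := by
      intro x
      have h1 := abs_exp_sub_exp (v x) (u₀ x)
      have h2 : Real.exp (max (v x) (u₀ x)) ≤ Z * Real.exp M := by
        rcases le_total (v x) (u₀ x) with h | h
        · rw [max_eq_right h]
          have h3 := hb0 x; rw [div_le_iff₀ hZ] at h3; linarith
        · rw [max_eq_left h]
          have h3 := hbv x; rw [div_le_iff₀ hZ] at h3; linarith
      have habs : |v x - u₀ x| = |u₁ x - u₀ x - B| := by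
        congr 1; simp only [hv]; ring
      calc (2 / Z) * |Real.exp (v x) - Real.exp (u₀ x)|
          ≤ (2 / Z) * (Real.exp (max (v x) (u₀ x)) * |v x - u₀ x|) := by
            refine mul_le_mul_of_nonneg_left h1 (by positivity)
        _ ≤ (2 / Z) * ((Z * Real.exp M) * |v x - u₀ x|) := by
            refine mul_le_mul_of_nonneg_left
              (mul_le_mul_of_nonneg_right h2 (abs_nonneg _)) (by positivity)
        _ = 2 * Real.exp M * |u₁ x - u₀ x - B| := by
            rw [← habs]; field_simp
    have hid : Integrable (fun x => 2 * Real.exp M * |u₁ x - u₀ x - B|) α := I_d.const_mul _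
    calc (2 / Z) * D = ∫ x, (2 / Z) * |Real.exp (v x) - Real.exp (u₀ x)| ∂α :=
          (integral_const_mul _ _).symm
      _ ≤ ∫ x, 2 * Real.exp M * |u₁ x - u₀ x - B| ∂α :=
          integral_mono_of_nonneg
            (ae_of_all _ fun x => mul_nonneg (by positivity) (abs_nonneg _))
            hid (ae_of_all _ hpt)
      _ = 2 * Real.exp M * ∫ σ, |u₁ σ - u₀ σ - B| ∂α := integral_const_mul _ _
  -- rewrite the LHS
  have hLHS : ∫ σ, |Real.exp (u₁ σ) / (∫ τ, Real.exp (u₁ τ) ∂α)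
      - Real.exp (u₀ σ) / (∫ τ, Real.exp (u₀ τ) ∂α)| ∂α
      = ∫ σ, |Real.exp (v σ) / Zv - Real.exp (u₀ σ) / Z₀| ∂α := by
    congr 1; funext σ; rw [hrw σ]
  rw [hLHS]
  rcases le_total Zv Z₀ with hZle | hZle
  · -- use the helper with f = u₀
    have h2 := tilt_L1_helper α u₀ v I_e0 I_ev hZ₀pos hZvpos
    have hsymm : ∫ x, |Real.exp (u₀ x) / Z₀ - Real.exp (v x) / Zv| ∂α
        = ∫ σ, |Real.exp (v σ) / Zv - Real.exp (u₀ σ) / Z₀| ∂α := by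
      congr 1; funext x; rw [abs_sub_comm]
    have hsymm2 : ∫ x, |Real.exp (u₀ x) - Real.exp (v x)| ∂α = D := by
      rw [hD]; congr 1; funext x; rw [abs_sub_comm]
    rw [hsymm, hsymm2] at h2
    refine h2.trans (key Z₀ hZ₀pos (fun x => ?_) h0_ub)
    exact le_trans (div_le_div_of_nonneg_left (Real.exp_pos _).le hZvpos hZle) (hv_ub x)
  · -- use the helper with f = v
    have h1 := tilt_L1_helper α v u₀ I_ev I_e0 hZvpos hZ₀pos
    refine h1.trans (key Zv hZvpos hv_ub (fun x => ?_))
    exact le_trans (div_le_div_of_nonneg_left (Real.exp_pos _).le hZ₀pos hZle) (h0_ub x)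
end

section
/- Let α be a probability measure on a measurable space S and let u₀, u₁ : S → ℝ be bounded measurable functions. For j = 0, 1 let h_j = exp(u_j) / ∫ exp(u_j) dα be the density with respect to α of the tilted probability measure. Then for every real number B, ∫ |h₁ − h₀| dα ≤ exp( max(osc(u₀), osc(u₁)) / 2 ) · ( ∫ (u₁ − u₀ − B)² dα )^{1/2}. -/
open MeasureTheory Real

section Aux
variable {S : Type*} [MeasurableSpace S] {α : Measure S} [IsProbabilityMeasure α]

lemma aux_integrable_of_bound {v : S → ℝ} (hv : AEStronglyMeasurable v α) (C : ℝ)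
    (h : ∀ x, |v x| ≤ C) : Integrable v α :=
  Integrable.mono' (integrable_const C) hv
    (Filter.Eventually.of_forall (by simpa [Real.norm_eq_abs] using h))

lemma aux_memL2_of_bound {v : S → ℝ} (hv : AEStronglyMeasurable v α) (C : ℝ)
    (h : ∀ x, |v x| ≤ C) : MemLp v (ENNReal.ofReal 2) α :=
  (memLp_top_of_bound hv C
    (Filter.Eventually.of_forall (by simpa [Real.norm_eq_abs] using h))).mono_exponent
      le_top

/-- Cauchy-Schwarz for a nonnegative bounded weight `ρ` and a bounded function `v`. -/
lemma aux_cauchy_schwarz {ρ v : S → ℝ} (hρ : AEStronglyMeasurable ρ α)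
    (hv : AEStronglyMeasurable v α) (hρ0 : ∀ x, 0 ≤ ρ x) (Cρ Cv : ℝ)
    (hρb : ∀ x, ρ x ≤ Cρ) (hvb : ∀ x, |v x| ≤ Cv) :
    ∫ x, ρ x * |v x| ∂α
      ≤ (∫ x, ρ x ∂α) ^ ((1:ℝ)/2) * (∫ x, ρ x * v x ^ 2 ∂α) ^ ((1:ℝ)/2) := by
  have hconj : (2:ℝ).HolderConjugate 2 := Real.HolderConjugate.two_two
  have hf : AEStronglyMeasurable (fun x => Real.sqrt (ρ x)) α :=
    Real.continuous_sqrt.comp_aestronglyMeasurable hρ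
  have hg : AEStronglyMeasurable (fun x => Real.sqrt (ρ x) * |v x|) α :=
    hf.mul (continuous_abs.comp_aestronglyMeasurable hv)
  have hfb : ∀ x, |Real.sqrt (ρ x)| ≤ Real.sqrt Cρ := fun x => by
    rw [abs_of_nonneg (Real.sqrt_nonneg _)]; exact Real.sqrt_le_sqrt (hρb x)
  have hgb : ∀ x, abs (Real.sqrt (ρ x) * |v x|) ≤ Real.sqrt Cρ * Cv := fun x => by
    rw [abs_mul, abs_of_nonneg (Real.sqrt_nonneg _), abs_abs]
    exact mul_le_mul (Real.sqrt_le_sqrt (hρb x)) (hvb x) (abs_nonneg _) (Real.sqrt_nonneg _)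
  have key := integral_mul_le_Lp_mul_Lq_of_nonneg (μ := α) hconj
    (f := fun x => Real.sqrt (ρ x)) (g := fun x => Real.sqrt (ρ x) * |v x|)
    (Filter.Eventually.of_forall fun x => Real.sqrt_nonneg _)
    (Filter.Eventually.of_forall fun x => mul_nonneg (Real.sqrt_nonneg _) (abs_nonneg _))
    (aux_memL2_of_bound hf _ hfb) (aux_memL2_of_bound hg _ hgb)
  have h1 : ∀ x, Real.sqrt (ρ x) * (Real.sqrt (ρ x) * |v x|) = ρ x * |v x| := fun x => by
    rw [← mul_assoc, Real.mul_self_sqrt (hρ0 x)]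
  have h2 : ∀ x, Real.sqrt (ρ x) ^ (2:ℝ) = ρ x := fun x => by
    rw [Real.rpow_two, Real.sq_sqrt (hρ0 x)]
  have h3 : ∀ x, (Real.sqrt (ρ x) * |v x|) ^ (2:ℝ) = ρ x * v x ^ 2 := fun x => by
    rw [Real.rpow_two, mul_pow, Real.sq_sqrt (hρ0 x), sq_abs]
  simp only [h1, h2, h3] at key
  exact key

end Aux
/-- Quadratic (Cauchy–Schwarz) tilting estimate: for two bounded measurable functions
`u₀, u₁` on a probability space `(S, α)`, the total variation distance between the
exponentially tilted probability densities `h_j = exp(u_j)/∫ exp(u_j) dα` is bounded,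
for every `B : ℝ`, by `exp(max(osc u₀, osc u₁)/2) · (∫ (u₁ − u₀ − B)² dα)^{1/2}`. -/
theorem tilted_density_L1_dist_le_quadratic_deviation
    {S : Type*} [MeasurableSpace S] (α : Measure S) [IsProbabilityMeasure α]
    (u₀ u₁ : S → ℝ) (hm₀ : Measurable u₀) (hm₁ : Measurable u₁)
    (C₀ : ℝ) (hb₀ : ∀ x, |u₀ x| ≤ C₀) (C₁ : ℝ) (hb₁ : ∀ x, |u₁ x| ≤ C₁)
    (B : ℝ) :
    ∫ σ, |Real.exp (u₁ σ) / (∫ τ, Real.exp (u₁ τ) ∂α)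
          - Real.exp (u₀ σ) / (∫ τ, Real.exp (u₀ τ) ∂α)| ∂α
      ≤ Real.exp (max ((⨆ x, u₀ x) - ⨅ x, u₀ x) ((⨆ x, u₁ x) - ⨅ x, u₁ x) / 2)
          * (∫ σ, (u₁ σ - u₀ σ - B) ^ 2 ∂α) ^ ((1 : ℝ) / 2) := by
  have hne : Nonempty S := by
    by_contra h
    rw [not_nonempty_iff] at h
    have h1 : α Set.univ = 1 := measure_univ
    rw [Set.univ_eq_empty_iff.mpr h, measure_empty] at h1
    exact zero_ne_one h1
  have hC₀ : 0 ≤ C₀ := le_trans (abs_nonneg _) (hb₀ (Classical.arbitrary S))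
  have hC₁ : 0 ≤ C₁ := le_trans (abs_nonneg _) (hb₁ (Classical.arbitrary S))
  set M : ℝ := max ((⨆ x, u₀ x) - ⨅ x, u₀ x) ((⨆ x, u₁ x) - ⨅ x, u₁ x) with hM
  set d : S → ℝ := fun σ => u₁ σ - u₀ σ with hd
  set K : ℝ := C₀ + C₁ with hK
  have hK0 : 0 ≤ K := add_nonneg hC₀ hC₁
  have hmd : Measurable d := hm₁.sub hm₀
  have hdb : ∀ σ, |d σ| ≤ K := by
    intro σ
    have h1 := hb₀ σ; have h2 := hb₁ σ
    calc |u₁ σ - u₀ σ| ≤ |u₁ σ| + |u₀ σ| := abs_sub _ _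
      _ ≤ C₀ + C₁ := by linarith
  set φ : ℝ → S → ℝ := fun t σ => u₀ σ + t * d σ with hφ
  have hφm : ∀ t, Measurable (φ t) := fun t => hm₀.add (hmd.const_mul t)
  have hφb : ∀ (t : ℝ) σ, |φ t σ| ≤ C₀ + |t| * K := by
    intro t σ
    calc |u₀ σ + t * d σ| ≤ |u₀ σ| + |t * d σ| := abs_add_le _ _
      _ ≤ C₀ + |t| * K := by
          rw [abs_mul]
          exact add_le_add (hb₀ σ) (mul_le_mul_of_nonneg_left (hdb σ) (abs_nonneg t))
  have hexpb : ∀ (t : ℝ) σ, Real.exp (φ t σ) ≤ Real.exp (C₀ + |t| * K) :=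
    fun t σ => Real.exp_le_exp.mpr ((le_abs_self _).trans (hφb t σ))
  have hexpint : ∀ t : ℝ, Integrable (fun σ => Real.exp (φ t σ)) α := by
    intro t
    refine aux_integrable_of_bound ((hφm t).exp.aestronglyMeasurable) (Real.exp (C₀ + |t| * K)) ?_
    intro σ
    rw [abs_of_pos (Real.exp_pos _)]
    exact hexpb t σ
  set Z : ℝ → ℝ := fun t => ∫ σ, Real.exp (φ t σ) ∂α with hZ
  set W : ℝ → ℝ := fun t => ∫ σ, Real.exp (φ t σ) * d σ ∂α with hW
  -- differentiation under the integral sign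
  have key : ∀ (g : S → ℝ), Measurable g → ∀ G : ℝ, (∀ σ, |g σ| ≤ G) → ∀ t₀ : ℝ,
      HasDerivAt (fun t => ∫ σ, Real.exp (φ t σ) * g σ ∂α)
        (∫ σ, Real.exp (φ t₀ σ) * d σ * g σ ∂α) t₀ := by
    intro g hg G hgb t₀
    have hG : 0 ≤ G := le_trans (abs_nonneg _) (hgb (Classical.arbitrary S))
    have hdiff : ∀ σ, ∀ t : ℝ, HasDerivAt (fun t => Real.exp (φ t σ) * g σ)
        (Real.exp (φ t σ) * d σ * g σ) t := by
      intro σ t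
      have h1 : HasDerivAt (fun t : ℝ => u₀ σ + t * d σ) (d σ) t :=
        (hasDerivAt_mul_const (d σ)).const_add (u₀ σ)
      exact h1.exp.mul_const (g σ)
    have hint : Integrable (fun σ => Real.exp (φ t₀ σ) * g σ) α := by
      refine aux_integrable_of_bound (((hφm t₀).exp.mul hg).aestronglyMeasurable)
        (Real.exp (C₀ + |t₀| * K) * G) ?_
      intro σ
      rw [abs_mul, abs_of_pos (Real.exp_pos _)]
      exact mul_le_mul (hexpb t₀ σ) (hgb σ) (abs_nonneg _) (le_of_lt (Real.exp_pos _))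
    have hbound : ∀ᵐ σ ∂α, ∀ t ∈ Metric.ball t₀ 1,
        ‖Real.exp (φ t σ) * d σ * g σ‖ ≤ Real.exp (C₀ + (|t₀| + 1) * K) * K * G := by
      refine Filter.Eventually.of_forall fun σ => fun t ht => ?_
      have htb : |t| ≤ |t₀| + 1 := by
        have h2 : |t - t₀| < 1 := by
          simpa [Real.dist_eq] using Metric.mem_ball.mp ht
        calc |t| = |t₀ + (t - t₀)| := by ring_nf
          _ ≤ |t₀| + |t - t₀| := abs_add_le _ _
          _ ≤ |t₀| + 1 := by linarith
      have he : Real.exp (φ t σ) ≤ Real.exp (C₀ + (|t₀| + 1) * K) := by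
        refine (hexpb t σ).trans (Real.exp_le_exp.mpr ?_)
        exact add_le_add le_rfl (mul_le_mul_of_nonneg_right htb hK0)
      rw [Real.norm_eq_abs, abs_mul, abs_mul, abs_of_pos (Real.exp_pos _)]
      exact mul_le_mul (mul_le_mul he (hdb σ) (abs_nonneg _) (le_of_lt (Real.exp_pos _)))
        (hgb σ) (abs_nonneg _) (mul_nonneg (le_of_lt (Real.exp_pos _)) hK0)
    exact (hasDerivAt_integral_of_dominated_loc_of_deriv_le (μ := α)
      (F := fun t σ => Real.exp (φ t σ) * g σ)
      (F' := fun t σ => Real.exp (φ t σ) * d σ * g σ)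
      (bound := fun _ => Real.exp (C₀ + (|t₀| + 1) * K) * K * G)
      (Metric.ball_mem_nhds t₀ one_pos)
      (Filter.Eventually.of_forall fun t => ((hφm t).exp.mul hg).aestronglyMeasurable)
      hint
      (((hφm t₀).exp.mul hmd).mul hg).aestronglyMeasurable
      hbound
      (integrable_const _)
      (Filter.Eventually.of_forall fun σ => fun t _ => hdiff σ t)).2
  have hZd : ∀ t : ℝ, HasDerivAt Z (W t) t := by
    intro t
    have h1 := key (fun _ => 1) measurable_const 1 (fun σ => by norm_num) t
    simp only [mul_one] at h1
    exact h1
  have hWd : ∀ t : ℝ, HasDerivAt W (∫ σ, Real.exp (φ t σ) * d σ * d σ ∂α) t :=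
    fun t => key d hmd K hdb t
  have hZc : Continuous Z := by
    rw [continuous_iff_continuousAt]; exact fun t => (hZd t).continuousAt
  have hWc : Continuous W := by
    rw [continuous_iff_continuousAt]; exact fun t => (hWd t).continuousAt
  have hZpos : ∀ t : ℝ, 0 < Z t := by
    intro t
    have h1 : ∀ σ, Real.exp (-(C₀ + |t| * K)) ≤ Real.exp (φ t σ) := fun σ =>
      Real.exp_le_exp.mpr ((neg_le_neg (hφb t σ)).trans (neg_abs_le _))
    calc (0:ℝ) < Real.exp (-(C₀ + |t| * K)) := Real.exp_pos _
      _ = ∫ _σ, Real.exp (-(C₀ + |t| * K)) ∂α := by simp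
      _ ≤ Z t := integral_mono (integrable_const _) (hexpint t) h1
  -- bound exp(φ t σ) ≤ exp M * Z t for t ∈ [0,1]
  have hA₀ : BddAbove (Set.range u₀) := ⟨C₀, by rintro _ ⟨x, rfl⟩; exact (le_abs_self _).trans (hb₀ x)⟩
  have hI₀ : BddBelow (Set.range u₀) := ⟨-C₀, by rintro _ ⟨x, rfl⟩; exact ((neg_le_neg (hb₀ x)).trans (neg_abs_le _))⟩
  have hA₁ : BddAbove (Set.range u₁) := ⟨C₁, by rintro _ ⟨x, rfl⟩; exact (le_abs_self _).trans (hb₁ x)⟩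
  have hI₁ : BddBelow (Set.range u₁) := ⟨-C₁, by rintro _ ⟨x, rfl⟩; exact ((neg_le_neg (hb₁ x)).trans (neg_abs_le _))⟩
  have hosc : ∀ t ∈ Set.Icc (0:ℝ) 1, ∀ σ σ', φ t σ ≤ M + φ t σ' := by
    intro t ht σ σ'
    have e1 : u₀ σ ≤ ⨆ x, u₀ x := le_ciSup hA₀ σ
    have e2 : u₁ σ ≤ ⨆ x, u₁ x := le_ciSup hA₁ σ
    have e3 : (⨅ x, u₀ x) ≤ u₀ σ' := ciInf_le hI₀ σ'
    have e4 : (⨅ x, u₁ x) ≤ u₁ σ' := ciInf_le hI₁ σ'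
    have e5 : (⨆ x, u₀ x) - (⨅ x, u₀ x) ≤ M := le_max_left _ _
    have e6 : (⨆ x, u₁ x) - (⨅ x, u₁ x) ≤ M := le_max_right _ _
    have h0 := ht.1; have h1 := ht.2
    simp only [hφ, hd]
    nlinarith [mul_le_mul_of_nonneg_left (sub_le_sub e2 e4) h0,
      mul_le_mul_of_nonneg_left (sub_le_sub e1 e3) (sub_nonneg.mpr h1),
      mul_le_mul_of_nonneg_left e6 h0,
      mul_le_mul_of_nonneg_left e5 (sub_nonneg.mpr h1)]
  have hM0 : 0 ≤ M := by
    have := hosc 0 (by constructor <;> norm_num) (Classical.arbitrary S) (Classical.arbitrary S)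
    linarith
  have hρle : ∀ t ∈ Set.Icc (0:ℝ) 1, ∀ σ, Real.exp (φ t σ) ≤ Real.exp M * Z t := by
    intro t ht σ
    have h1 : ∀ σ', Real.exp (φ t σ) ≤ Real.exp M * Real.exp (φ t σ') := by
      intro σ'
      rw [← Real.exp_add]
      exact Real.exp_le_exp.mpr (hosc t ht σ σ')
    calc Real.exp (φ t σ) = ∫ _σ', Real.exp (φ t σ) ∂α := by simp
      _ ≤ ∫ σ', Real.exp M * Real.exp (φ t σ') ∂α :=
          integral_mono (integrable_const _) ((hexpint t).const_mul _) h1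
      _ = Real.exp M * Z t := integral_const_mul _ _
    -- quadratic deviation
  set Q : ℝ := ∫ σ, (d σ - B) ^ 2 ∂α with hQ
  have hQ0 : 0 ≤ Q := integral_nonneg fun σ => sq_nonneg _
  have hQint : Integrable (fun σ => (d σ - B) ^ 2) α := by
    refine aux_integrable_of_bound
      (((hmd.sub measurable_const).pow_const 2).aestronglyMeasurable) ((K + |B|) ^ 2) ?_
    intro σ
    rw [abs_of_nonneg (sq_nonneg _), ← sq_abs]
    have h1 : |d σ - B| ≤ K + |B| := (abs_sub _ _).trans (add_le_add (hdb σ) le_rfl)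
    exact pow_le_pow_left₀ (abs_nonneg _) h1 2
  have hWb : ∀ t : ℝ, |W t| ≤ K * Z t := by
    intro t
    have hint : Integrable (fun σ => Real.exp (φ t σ) * d σ) α := by
      refine aux_integrable_of_bound (((hφm t).exp.mul hmd).aestronglyMeasurable)
        (Real.exp (C₀ + |t| * K) * K) ?_
      intro σ
      rw [abs_mul, abs_of_pos (Real.exp_pos _)]
      exact mul_le_mul (hexpb t σ) (hdb σ) (abs_nonneg _) (Real.exp_pos _).le
    calc |W t| ≤ ∫ σ, Real.exp (φ t σ) * |d σ| ∂α := by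
          simpa [Real.norm_eq_abs, abs_mul, abs_of_pos (Real.exp_pos _)] using
            norm_integral_le_integral_norm (μ := α) (fun σ => Real.exp (φ t σ) * d σ)
      _ ≤ ∫ σ, K * Real.exp (φ t σ) ∂α := by
          refine integral_mono ?_ ((hexpint t).const_mul _) fun σ => ?_
          · refine aux_integrable_of_bound (((hφm t).exp.mul hmd.abs).aestronglyMeasurable)
              (Real.exp (C₀ + |t| * K) * K) fun σ => ?_
            rw [abs_mul, abs_of_pos (Real.exp_pos _), abs_abs]
            exact mul_le_mul (hexpb t σ) (hdb σ) (abs_nonneg _) (Real.exp_pos _).le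
          · rw [mul_comm]
            exact mul_le_mul_of_nonneg_right (hdb σ) (Real.exp_pos _).le
      _ = K * Z t := integral_const_mul _ _
  have hcb : ∀ t : ℝ, |W t / Z t| ≤ K := by
    intro t
    rw [abs_div, abs_of_pos (hZpos t), div_le_iff₀ (hZpos t)]
    exact hWb t
  set D : S → ℝ → ℝ := fun σ t =>
    (Real.exp (φ t σ) * d σ * Z t - Real.exp (φ t σ) * W t) / Z t ^ 2 with hD
  have hDabs : ∀ σ (t : ℝ), |D σ t| = Real.exp (φ t σ) / Z t * |d σ - W t / Z t| := by
    intro σ t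
    have h0 : Z t ≠ 0 := (hZpos t).ne'
    have h1 : D σ t = Real.exp (φ t σ) / Z t * (d σ - W t / Z t) := by
      simp only [hD]; field_simp
    rw [h1, abs_mul, abs_of_nonneg (div_nonneg (Real.exp_pos _).le (hZpos t).le)]
  have hDb : ∀ (t : ℝ), t ∈ Set.Icc (0:ℝ) 1 → ∀ σ, |D σ t| ≤ Real.exp M * (K + K) := by
    intro t ht σ
    rw [hDabs]
    refine mul_le_mul ?_ ((abs_sub _ _).trans (add_le_add (hdb σ) (hcb t)))
      (abs_nonneg _) (Real.exp_pos _).le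
    rw [div_le_iff₀ (hZpos t)]
    exact hρle t ht σ
  have hratio : ∀ σ (t : ℝ), HasDerivAt (fun t => Real.exp (φ t σ) / Z t) (D σ t) t := by
    intro σ t
    have h1 : HasDerivAt (fun t : ℝ => u₀ σ + t * d σ) (d σ) t :=
      (hasDerivAt_mul_const (d σ)).const_add (u₀ σ)
    have h2 := h1.exp.div (hZd t) (hZpos t).ne'
    exact h2
  have hDcont : ∀ σ, Continuous fun t => D σ t := by
    intro σ
    have hc1 : Continuous fun t : ℝ => Real.exp (φ t σ) := by
      simp only [hφ]
      exact Real.continuous_exp.comp (continuous_const.add (continuous_id.mul continuous_const))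
    simp only [hD]
    exact (((hc1.mul continuous_const).mul hZc).sub (hc1.mul hWc)).div (hZc.pow 2)
      fun t => pow_ne_zero 2 (hZpos t).ne'
  have hFTC : ∀ σ, ∫ t in (0:ℝ)..1, D σ t
      = Real.exp (φ 1 σ) / Z 1 - Real.exp (φ 0 σ) / Z 0 := by
    intro σ
    exact intervalIntegral.integral_eq_sub_of_hasDerivAt (fun t _ => hratio σ t)
      ((hDcont σ).intervalIntegrable 0 1)
  -- the per-t estimate
  have est : ∀ t ∈ Set.Icc (0:ℝ) 1,
      ∫ σ, |D σ t| ∂α ≤ Real.exp (M / 2) * Q ^ ((1:ℝ) / 2) := by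
    intro t ht
    have hρm : AEStronglyMeasurable (fun σ => Real.exp (φ t σ) / Z t) α :=
      ((hφm t).exp.div_const _).aestronglyMeasurable
    have hρ0 : ∀ σ, 0 ≤ Real.exp (φ t σ) / Z t :=
      fun σ => div_nonneg (Real.exp_pos _).le (hZpos t).le
    have hρb : ∀ σ, Real.exp (φ t σ) / Z t ≤ Real.exp M := by
      intro σ; rw [div_le_iff₀ (hZpos t)]; exact hρle t ht σ
    have hρint1 : ∫ σ, Real.exp (φ t σ) / Z t ∂α = 1 := by
      rw [integral_div]
      exact div_self (hZpos t).ne'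
    have hvb : ∀ σ, |d σ - W t / Z t| ≤ K + K :=
      fun σ => (abs_sub _ _).trans (add_le_add (hdb σ) (hcb t))
    have hvm : AEStronglyMeasurable (fun σ => d σ - W t / Z t) α :=
      (hmd.sub measurable_const).aestronglyMeasurable
    have hcs := aux_cauchy_schwarz (α := α) hρm hvm hρ0 (Real.exp M) (K + K) hρb hvb
    have hρd : ∫ σ, Real.exp (φ t σ) / Z t * d σ ∂α = W t / Z t := by
      simp only [div_mul_eq_mul_div]
      rw [integral_div, hW]
    -- integrability of the pieces
    have hρint : Integrable (fun σ => Real.exp (φ t σ) / Z t) α :=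
      aux_integrable_of_bound hρm (Real.exp M)
        (fun σ => by rw [abs_of_nonneg (hρ0 σ)]; exact hρb σ)
    have hρdint : Integrable (fun σ => Real.exp (φ t σ) / Z t * d σ) α := by
      refine aux_integrable_of_bound (hρm.mul hmd.aestronglyMeasurable) (Real.exp M * K) ?_
      intro σ
      rw [abs_mul, abs_of_nonneg (hρ0 σ)]
      exact mul_le_mul (hρb σ) (hdb σ) (abs_nonneg _) (Real.exp_pos _).le
    have hsqb : ∀ (c' : ℝ), (∀ σ, |d σ - c'| ≤ K + K) →
        ∀ σ, |Real.exp (φ t σ) / Z t * (d σ - c') ^ 2| ≤ Real.exp M * (K + K) ^ 2 := by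
      intro c' hc' σ
      rw [abs_mul, abs_of_nonneg (hρ0 σ), abs_of_nonneg (sq_nonneg _)]
      refine mul_le_mul (hρb σ) ?_ (sq_nonneg _) (Real.exp_pos _).le
      rw [← sq_abs]
      exact pow_le_pow_left₀ (abs_nonneg _) (hc' σ) 2
    have hρc2int : Integrable (fun σ => Real.exp (φ t σ) / Z t * (d σ - W t / Z t) ^ 2) α :=
      aux_integrable_of_bound
        (hρm.mul ((hmd.sub measurable_const).pow_const 2).aestronglyMeasurable) _
        (hsqb _ hvb)
    have hvbB : ∀ σ, |d σ - B| ≤ K + |B| :=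
      fun σ => (abs_sub _ _).trans (add_le_add (hdb σ) le_rfl)
    have hρB2int : Integrable (fun σ => Real.exp (φ t σ) / Z t * (d σ - B) ^ 2) α := by
      refine aux_integrable_of_bound
        (hρm.mul ((hmd.sub measurable_const).pow_const 2).aestronglyMeasurable)
        (Real.exp M * (K + |B|) ^ 2) ?_
      intro σ
      rw [abs_mul, abs_of_nonneg (hρ0 σ), abs_of_nonneg (sq_nonneg _)]
      refine mul_le_mul (hρb σ) ?_ (sq_nonneg _) (Real.exp_pos _).le
      rw [← sq_abs]
      exact pow_le_pow_left₀ (abs_nonneg _) (hvbB σ) 2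
    -- variance comparison
    have hvar : ∫ σ, Real.exp (φ t σ) / Z t * (d σ - W t / Z t) ^ 2 ∂α
        ≤ ∫ σ, Real.exp (φ t σ) / Z t * (d σ - B) ^ 2 ∂α := by
      have hexpand : (fun σ => Real.exp (φ t σ) / Z t * (d σ - B) ^ 2)
          = fun σ => Real.exp (φ t σ) / Z t * (d σ - W t / Z t) ^ 2
            + (2 * (W t / Z t - B)) * (Real.exp (φ t σ) / Z t * d σ)
            + (-(W t / Z t - B) * (B + W t / Z t)) * (Real.exp (φ t σ) / Z t) := by
        funext σ; ring
      have e1 := integral_add ((hρc2int.add (hρdint.const_mul (2 * (W t / Z t - B)))))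
        (hρint.const_mul (-(W t / Z t - B) * (B + W t / Z t)))
      have e2 := integral_add hρc2int (hρdint.const_mul (2 * (W t / Z t - B)))
      simp only [Pi.add_apply] at e1 e2
      have h1 : ∫ σ, Real.exp (φ t σ) / Z t * (d σ - B) ^ 2 ∂α
          = ∫ σ, Real.exp (φ t σ) / Z t * (d σ - W t / Z t) ^ 2 ∂α
            + (2 * (W t / Z t - B)) * (W t / Z t)
            + (-(W t / Z t - B) * (B + W t / Z t)) * 1 := by
        rw [hexpand, e1, e2, integral_const_mul, integral_const_mul, hρd, hρint1]
      nlinarith [sq_nonneg (W t / Z t - B)]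
    have hmono : ∫ σ, Real.exp (φ t σ) / Z t * (d σ - B) ^ 2 ∂α ≤ Real.exp M * Q := by
      rw [hQ, ← integral_const_mul]
      exact integral_mono hρB2int (hQint.const_mul _)
        fun σ => mul_le_mul_of_nonneg_right (hρb σ) (sq_nonneg _)
    calc ∫ σ, |D σ t| ∂α
        = ∫ σ, Real.exp (φ t σ) / Z t * |d σ - W t / Z t| ∂α :=
          integral_congr_ae (Filter.Eventually.of_forall fun σ => hDabs σ t)
      _ ≤ (∫ σ, Real.exp (φ t σ) / Z t ∂α) ^ ((1:ℝ)/2)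
            * (∫ σ, Real.exp (φ t σ) / Z t * (d σ - W t / Z t) ^ 2 ∂α) ^ ((1:ℝ)/2) := hcs
      _ = (∫ σ, Real.exp (φ t σ) / Z t * (d σ - W t / Z t) ^ 2 ∂α) ^ ((1:ℝ)/2) := by
          rw [hρint1, Real.one_rpow, one_mul]
      _ ≤ (Real.exp M * Q) ^ ((1:ℝ)/2) := by
          refine Real.rpow_le_rpow (integral_nonneg fun σ => mul_nonneg (hρ0 σ) (sq_nonneg _))
            (hvar.trans hmono) (by norm_num)
      _ = Real.exp (M / 2) * Q ^ ((1:ℝ)/2) := by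
          rw [Real.mul_rpow (Real.exp_pos _).le hQ0, ← Real.exp_mul]
          ring_nf
  -- identifications at the endpoints
  have hφ1 : φ 1 = u₁ := by funext σ; simp only [hφ, hd]; ring
  have hφ0 : φ 0 = u₀ := by funext σ; simp only [hφ, hd]; ring
  have hZ1 : (∫ τ, Real.exp (u₁ τ) ∂α) = Z 1 := by simp only [hZ, hφ1]
  have hZ0 : (∫ τ, Real.exp (u₀ τ) ∂α) = Z 0 := by simp only [hZ, hφ0]
  -- the product measure on [0,1]
  set ν : Measure ℝ := volume.restrict (Set.Ioc (0:ℝ) 1) with hν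
  haveI hνprob : IsProbabilityMeasure ν := by
    constructor
    rw [hν, Measure.restrict_apply_univ, Real.volume_Ioc]
    norm_num
  have hjm : Measurable (Function.uncurry fun σ t => |D σ t|) := by
    have h1 : Measurable fun p : S × ℝ => Real.exp (φ p.2 p.1) := by
      simp only [hφ]
      exact ((hm₀.comp measurable_fst).add (measurable_snd.mul (hmd.comp measurable_fst))).exp
    have h2 : Measurable fun p : S × ℝ => D p.1 p.2 := by
      simp only [hD]
      exact (((h1.mul (hmd.comp measurable_fst)).mul (hZc.measurable.comp measurable_snd)).sub
        (h1.mul (hWc.measurable.comp measurable_snd))).div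
        ((hZc.measurable.comp measurable_snd).pow_const 2)
    exact h2.abs
  have hae : ∀ᵐ p : S × ℝ ∂(α.prod ν), p.2 ∈ Set.Ioc (0:ℝ) 1 := by
    rw [ae_iff]
    have hset : {p : S × ℝ | ¬ p.2 ∈ Set.Ioc (0:ℝ) 1} = Set.univ ×ˢ (Set.Ioc (0:ℝ) 1)ᶜ := by
      ext p; simp
    rw [hset, Measure.prod_prod]
    have hν0 : ν (Set.Ioc (0:ℝ) 1)ᶜ = 0 := by
      rw [hν, Measure.restrict_apply measurableSet_Ioc.compl]
      simp
    rw [hν0, mul_zero]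
  have hDprodint : Integrable (Function.uncurry fun σ t => |D σ t|) (α.prod ν) := by
    refine Integrable.mono' (integrable_const (Real.exp M * (K + K)))
      hjm.aestronglyMeasurable ?_
    filter_upwards [hae] with p hp
    rw [Real.norm_eq_abs, Function.uncurry, abs_abs]
    exact hDb p.2 ⟨hp.1.le, hp.2⟩ p.1
  have hIntOuter : Integrable (fun σ => ∫ t in (0:ℝ)..1, |D σ t|) α := by
    have h1 := hDprodint.integral_prod_left
    refine h1.congr (Filter.Eventually.of_forall fun σ => ?_)
    simp only [Function.uncurry_apply_pair]
    rw [intervalIntegral.integral_of_le (zero_le_one (α := ℝ)), hν]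
  have hQgoal : Q = ∫ σ, (u₁ σ - u₀ σ - B) ^ 2 ∂α := by
    simp only [hQ, hd]
  -- assembly
  calc ∫ σ, |Real.exp (u₁ σ) / (∫ τ, Real.exp (u₁ τ) ∂α)
          - Real.exp (u₀ σ) / (∫ τ, Real.exp (u₀ τ) ∂α)| ∂α
      = ∫ σ, |∫ t in (0:ℝ)..1, D σ t| ∂α := by
        refine integral_congr_ae (Filter.Eventually.of_forall fun σ => ?_)
        simp only [hFTC, hφ1, hφ0, hZ1, hZ0]
    _ ≤ ∫ σ, (∫ t in (0:ℝ)..1, |D σ t|) ∂α := by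
        refine integral_mono_of_nonneg (Filter.Eventually.of_forall fun σ => abs_nonneg _)
          hIntOuter (Filter.Eventually.of_forall fun σ => ?_)
        exact intervalIntegral.abs_integral_le_integral_abs zero_le_one
    _ = ∫ σ, (∫ t, |D σ t| ∂ν) ∂α := by
        refine integral_congr_ae (Filter.Eventually.of_forall fun σ => ?_)
        simp only [intervalIntegral.integral_of_le (zero_le_one (α := ℝ)), hν]
    _ = ∫ t, (∫ σ, |D σ t| ∂α) ∂ν := integral_integral_swap hDprodint
    _ ≤ ∫ _t, Real.exp (M / 2) * Q ^ ((1:ℝ)/2) ∂ν := by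
        refine integral_mono_of_nonneg
          (Filter.Eventually.of_forall fun t => integral_nonneg fun σ => abs_nonneg _)
          (integrable_const _) ?_
        filter_upwards [ae_restrict_mem measurableSet_Ioc] with t htmem
        exact est t ⟨htmem.1.le, htmem.2⟩
    _ = Real.exp (M / 2) * Q ^ ((1:ℝ)/2) := by
        rw [integral_const, probReal_univ]
        simp
    _ = Real.exp (M / 2) * (∫ σ, (u₁ σ - u₀ σ - B) ^ 2 ∂α) ^ ((1:ℝ)/2) := by
        rw [hQgoal]
end

section
/- Let α be a probability measure on a measurable space S, let M ≥ 0, and let h : S → ℝ be a nonnegative measurable function with ∫ h dα = 1 and h ≤ M pointwise. Let λ be the probability measure with density h with respect to α, and let F : S → ℝ be bounded measurable. Then for every real number B, ∫ |F − ∫ F dλ| dλ ≤ 2 · M · ∫ |F − B| dα. -/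
open MeasureTheory Real
open scoped NNReal ENNReal

/-- Mean absolute deviation under a measure with bounded density: if `h ≥ 0` is a probability
density w.r.t. `α` with `h ≤ M`, `λ = h·α`, and `F` is bounded measurable, then for every
`B : ℝ`, `∫ |F − λ(F)| dλ ≤ 2 M ∫ |F − B| dα`. -/
theorem mean_abs_deviation_le_of_density_le
    {S : Type*} [MeasurableSpace S] (α : Measure S) [IsProbabilityMeasure α]
    (M : ℝ) (hM : 0 ≤ M)
    (h : S → ℝ) (hmh : Measurable h) (hh0 : ∀ x, 0 ≤ h x)
    (hnorm : ∫ x, h x ∂α = 1) (hhM : ∀ x, h x ≤ M)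
    (F : S → ℝ) (hmF : Measurable F) (CF : ℝ) (hbF : ∀ x, |F x| ≤ CF)
    (B : ℝ) :
    (∫ x, |F x - ∫ y, F y ∂(α.withDensity (fun z => ENNReal.ofReal (h z)))|
        ∂(α.withDensity (fun z => ENNReal.ofReal (h z))))
      ≤ 2 * M * ∫ x, |F x - B| ∂α := by
  set lam := α.withDensity (fun z => ENNReal.ofReal (h z)) with hlam
  -- integrability of h
  have hint_h : Integrable h α := by
    refine Integrable.mono' (integrable_const M) hmh.aestronglyMeasurable ?_
    exact ae_of_all _ fun x => by
      rw [Real.norm_eq_abs, abs_of_nonneg (hh0 x)]; exact hhM x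
  -- converting integrals
  have key : ∀ g : S → ℝ, Measurable g → ∫ x, g x ∂lam = ∫ x, h x * g x ∂α := by
    intro g hg
    have : (fun z => ENNReal.ofReal (h z)) = fun z => ((h z).toNNReal : ℝ≥0∞) := rfl
    rw [hlam, this, integral_withDensity_eq_integral_smul hmh.real_toNNReal]
    congr 1; ext x
    simp [NNReal.smul_def, Real.coe_toNNReal _ (hh0 x)]
  -- lam is a probability measure
  have hprob : IsProbabilityMeasure lam := by
    constructor
    rw [hlam, withDensity_apply _ MeasurableSet.univ, setLIntegral_univ,
      ← ofReal_integral_eq_lintegral_ofReal hint_h (ae_of_all _ hh0), hnorm]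
    simp
  haveI := hprob
  -- integrability of bounded functions
  have hintF : ∀ (μ : Measure S) [IsProbabilityMeasure μ] (g : S → ℝ) (C : ℝ),
      Measurable g → (∀ x, |g x| ≤ C) → Integrable g μ := by
    intro μ _ g C hg hb
    exact Integrable.mono' (integrable_const C) hg.aestronglyMeasurable
      (ae_of_all _ fun x => by rw [Real.norm_eq_abs]; exact hb x)
  set m := ∫ y, F y ∂lam with hm
  have hmFB : Measurable fun x => |F x - B| := (hmF.sub measurable_const).abs
  have hiFB : Integrable (fun x => |F x - B|) lam :=
    hintF lam _ (CF + |B|) hmFB fun x => by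
      rw [abs_abs]; exact (abs_sub _ _).trans (add_le_add (hbF x) le_rfl)
  have hiFm : Integrable (fun x => |F x - m|) lam :=
    hintF lam _ (CF + |m|) ((hmF.sub measurable_const).abs) fun x => by
      rw [abs_abs]; exact (abs_sub _ _).trans (add_le_add (hbF x) le_rfl)
  have hiF : Integrable F lam := hintF lam _ CF hmF hbF
  -- |B - m| ≤ ∫ |F - B| dlam
  have hbound : ∀ x : S, |(|F x - B|)| ≤ CF + |B| := fun x => by
    rw [abs_abs]; exact (abs_sub _ _).trans (add_le_add (hbF x) le_rfl)
  have hBm : |B - m| ≤ ∫ x, |F x - B| ∂lam := by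
    have h1 : B - m = ∫ x, (B - F x) ∂lam := by
      rw [integral_sub (integrable_const B) hiF, integral_const, probReal_univ]
      simp [hm]
    rw [h1]
    calc |∫ x, (B - F x) ∂lam| ≤ ∫ x, |B - F x| ∂lam := by
          simpa [Real.norm_eq_abs] using
            norm_integral_le_integral_norm (fun x => B - F x) (μ := lam)
      _ = ∫ x, |F x - B| ∂lam := by simp [abs_sub_comm]
  -- step 1: triangle inequality
  have step1 : ∫ x, |F x - m| ∂lam ≤ ∫ x, |F x - B| ∂lam + |B - m| := by
    have h2 : ∫ x, |F x - m| ∂lam ≤ ∫ x, (|F x - B| + |B - m|) ∂lam := by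
      refine integral_mono hiFm (hiFB.add (integrable_const _)) fun x => ?_
      calc |F x - m| = |(F x - B) + (B - m)| := by ring_nf
        _ ≤ |F x - B| + |B - m| := abs_add_le _ _
    rw [integral_add hiFB (integrable_const _), integral_const] at h2
    simpa using h2
  have step2 : ∫ x, |F x - m| ∂lam ≤ 2 * ∫ x, |F x - B| ∂lam := by
    linarith [step1, hBm]
  -- step 3: bound by α-integral
  have hi1 : Integrable (fun x => h x * |F x - B|) α := by
    refine hintF α _ (M * (CF + |B|)) (hmh.mul hmFB) fun x => ?_
    rw [abs_mul, abs_of_nonneg (hh0 x)]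
    exact mul_le_mul (hhM x) (hbound x) (abs_nonneg _) hM
  have hi2 : Integrable (fun x => M * |F x - B|) α := by
    refine hintF α _ (M * (CF + |B|)) (measurable_const.mul hmFB) fun x => ?_
    rw [abs_mul, abs_of_nonneg hM]
    exact mul_le_mul le_rfl (hbound x) (abs_nonneg _) hM
  have step3 : ∫ x, |F x - B| ∂lam ≤ M * ∫ x, |F x - B| ∂α := by
    rw [key _ hmFB, ← integral_const_mul]
    exact integral_mono hi1 hi2 fun x =>
      mul_le_mul_of_nonneg_right (hhM x) (abs_nonneg _)
  have hFBnn : 0 ≤ ∫ x, |F x - B| ∂lam := integral_nonneg fun x => abs_nonneg _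
  calc ∫ x, |F x - m| ∂lam ≤ 2 * ∫ x, |F x - B| ∂lam := step2
    _ ≤ 2 * (M * ∫ x, |F x - B| ∂α) := by linarith [step3]
    _ = 2 * M * ∫ x, |F x - B| ∂α := by ring
end

section
/- Let S be a measurable space, let ψ : S → ℝ be bounded measurable, and let κ and κ′ be probability measures on S. Define the tilted probability measures ν(g) = (∫ g·exp(ψ) dκ)/(∫ exp(ψ) dκ) and ν′(g) = (∫ g·exp(ψ) dκ′)/(∫ exp(ψ) dκ′). Then for every measurable g : S → ℝ with |g| ≤ 1 pointwise, |ν(g) − ν′(g)| ≤ 2 · exp(osc(ψ)) · ‖κ − κ′‖, where ‖κ − κ′‖ denotes the total variation norm sup over measurable f with |f| ≤ 1 of |∫ f dκ − ∫ f dκ′|. -/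
open MeasureTheory Real

/-- Comparison of two Gibbsian single-site measures with the same bounded Hamiltonian `ψ`
but different a priori measures `κ, κ′`: for every measurable `g` with `|g| ≤ 1`,
`|ν(g) − ν′(g)| ≤ 2 · exp(osc ψ) · ‖κ − κ′‖`, where `ν(g) = κ(g e^ψ)/κ(e^ψ)` and
`‖κ − κ′‖` is the sup over measurable `f` with `|f| ≤ 1` of `|κ(f) − κ′(f)|`. -/
theorem tilted_measure_dist_le_total_variation
    {S : Type*} [MeasurableSpace S] (κ κ' : Measure S)
    [IsProbabilityMeasure κ] [IsProbabilityMeasure κ']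
    (ψ : S → ℝ) (hmψ : Measurable ψ) (Cψ : ℝ) (hbψ : ∀ x, |ψ x| ≤ Cψ)
    (g : S → ℝ) (hmg : Measurable g) (hbg : ∀ x, |g x| ≤ 1) :
    |(∫ x, g x * Real.exp (ψ x) ∂κ) / (∫ x, Real.exp (ψ x) ∂κ)
      - (∫ x, g x * Real.exp (ψ x) ∂κ') / (∫ x, Real.exp (ψ x) ∂κ')|
      ≤ 2 * Real.exp ((⨆ x, ψ x) - ⨅ x, ψ x) *
          ⨆ f : {f : S → ℝ // Measurable f ∧ ∀ x, |f x| ≤ 1},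
            |∫ x, (f : S → ℝ) x ∂κ - ∫ x, (f : S → ℝ) x ∂κ'| := by
  -- S is nonempty since κ is a probability measure
  have hne : Nonempty S := by
    by_contra h
    rw [not_nonempty_iff] at h
    have h1 : κ Set.univ = 1 := measure_univ
    rw [Set.univ_eq_empty_iff.2 h, measure_empty] at h1
    exact zero_ne_one h1
  -- bounds on sup/inf of ψ
  have hbddA : BddAbove (Set.range ψ) := ⟨Cψ, by rintro r ⟨x, rfl⟩; exact (abs_le.1 (hbψ x)).2⟩
  have hbddB : BddBelow (Set.range ψ) := ⟨-Cψ, by rintro r ⟨x, rfl⟩; exact (abs_le.1 (hbψ x)).1⟩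
  have hψ_le : ∀ x, ψ x ≤ ⨆ y, ψ y := fun x => le_ciSup hbddA x
  have hψ_ge : ∀ x, ⨅ y, ψ y ≤ ψ x := fun x => ciInf_le hbddB x
  set M := Real.exp (⨆ y, ψ y) with hM
  set m := Real.exp (⨅ y, ψ y) with hm
  have hMpos : 0 < M := Real.exp_pos _
  have hmpos : 0 < m := Real.exp_pos _
  -- integrability of bounded measurable functions
  have hint : ∀ (h : S → ℝ) (C : ℝ), Measurable h → (∀ x, |h x| ≤ C) →
      ∀ (μ : Measure S) [IsProbabilityMeasure μ], Integrable h μ := by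
    intro h C hmh hb μ _
    refine ⟨hmh.aestronglyMeasurable, ?_⟩
    exact HasFiniteIntegral.of_bounded (C := C) (Filter.Eventually.of_forall fun x => hb x)
  set T := ⨆ f : {f : S → ℝ // Measurable f ∧ ∀ x, |f x| ≤ 1},
      |∫ x, (f : S → ℝ) x ∂κ - ∫ x, (f : S → ℝ) x ∂κ'| with hT
  have hbddT : BddAbove (Set.range fun f : {f : S → ℝ // Measurable f ∧ ∀ x, |f x| ≤ 1} =>
      |∫ x, (f : S → ℝ) x ∂κ - ∫ x, (f : S → ℝ) x ∂κ'|) := by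
    refine ⟨2, ?_⟩
    rintro r ⟨⟨f, hmf, hbf⟩, rfl⟩
    have h1 : ‖∫ x, f x ∂κ‖ ≤ 1 := by
      have := norm_integral_le_of_norm_le_const (μ := κ) (f := f) (C := 1)
        (Filter.Eventually.of_forall fun x => by simpa using hbf x)
      simpa using this
    have h2 : ‖∫ x, f x ∂κ'‖ ≤ 1 := by
      have := norm_integral_le_of_norm_le_const (μ := κ') (f := f) (C := 1)
        (Filter.Eventually.of_forall fun x => by simpa using hbf x)
      simpa using this
    calc |∫ x, f x ∂κ - ∫ x, f x ∂κ'| ≤ ‖∫ x, f x ∂κ‖ + ‖∫ x, f x ∂κ'‖ := abs_sub _ _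
      _ ≤ 1 + 1 := add_le_add h1 h2
      _ = 2 := by norm_num
  have hTnonneg : 0 ≤ T := by
    have : |∫ x, (fun _ : S => (0:ℝ)) x ∂κ - ∫ x, (fun _ : S => (0:ℝ)) x ∂κ'| ≤ T :=
      le_ciSup hbddT ⟨fun _ => 0, measurable_const, fun x => by norm_num⟩
    simpa using this
  -- key estimate
  have key : ∀ (h : S → ℝ), Measurable h → (∀ x, |h x| ≤ M) →
      |∫ x, h x ∂κ - ∫ x, h x ∂κ'| ≤ M * T := by
    intro h hmh hb
    have hf : ∀ x, |h x / M| ≤ 1 := fun x => by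
      rw [abs_div, abs_of_pos hMpos]
      exact div_le_one_of_le₀ (hb x) hMpos.le
    have hle : |∫ x, h x / M ∂κ - ∫ x, h x / M ∂κ'| ≤ T :=
      le_ciSup hbddT ⟨fun x => h x / M, hmh.div_const M, hf⟩
    rw [integral_div, integral_div, div_sub_div_same, abs_div, abs_of_pos hMpos,
      div_le_iff₀ hMpos] at hle
    linarith [hle]
  -- notations
  set A := ∫ x, g x * Real.exp (ψ x) ∂κ with hA
  set A' := ∫ x, g x * Real.exp (ψ x) ∂κ' with hA'
  set B := ∫ x, Real.exp (ψ x) ∂κ with hB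
  set B' := ∫ x, Real.exp (ψ x) ∂κ' with hB'
  have hbe : ∀ x, |Real.exp (ψ x)| ≤ M := fun x => by
    rw [abs_of_pos (Real.exp_pos _)]; exact Real.exp_le_exp.2 (hψ_le x)
  have hbge : ∀ x, |g x * Real.exp (ψ x)| ≤ M := fun x => by
    rw [abs_mul]
    calc |g x| * |Real.exp (ψ x)| ≤ 1 * M := mul_le_mul (hbg x) (hbe x) (abs_nonneg _) zero_le_one
      _ = M := one_mul M
  have hinte : ∀ (μ : Measure S) [IsProbabilityMeasure μ], Integrable (fun x => Real.exp (ψ x)) μ :=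
    fun μ _ => hint _ M (Real.measurable_exp.comp hmψ) hbe μ
  have hintge : ∀ (μ : Measure S) [IsProbabilityMeasure μ],
      Integrable (fun x => g x * Real.exp (ψ x)) μ :=
    fun μ _ => hint _ M (hmg.mul (Real.measurable_exp.comp hmψ)) hbge μ
  -- lower bounds on B, B'
  have hBlb : ∀ (μ : Measure S) [IsProbabilityMeasure μ], m ≤ ∫ x, Real.exp (ψ x) ∂μ := by
    intro μ _
    calc m = ∫ _x, m ∂μ := by simp
      _ ≤ ∫ x, Real.exp (ψ x) ∂μ := integral_mono (integrable_const m) (hinte μ)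
          (fun x => Real.exp_le_exp.2 (hψ_ge x))
  have hBpos : 0 < B := lt_of_lt_of_le hmpos (hBlb κ)
  have hB'pos : 0 < B' := lt_of_lt_of_le hmpos (hBlb κ')
  have hBm : m ≤ B := hBlb κ
  -- |A'| ≤ B'
  have hA'le : |A'| ≤ B' := by
    have h1 : ‖A'‖ ≤ ∫ x, ‖g x * Real.exp (ψ x)‖ ∂κ' := norm_integral_le_integral_norm _
    have h2 : ∫ x, ‖g x * Real.exp (ψ x)‖ ∂κ' ≤ B' := by
      refine integral_mono ((hintge κ').norm) (hinte κ') fun x => ?_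
      rw [norm_mul, Real.norm_eq_abs, Real.norm_eq_abs, abs_of_pos (Real.exp_pos _)]
      calc |g x| * Real.exp (ψ x) ≤ 1 * Real.exp (ψ x) :=
            mul_le_mul_of_nonneg_right (hbg x) (Real.exp_pos _).le
        _ = Real.exp (ψ x) := one_mul _
    exact le_trans h1 h2
  have hAd : |A - A'| ≤ M * T := key _ (hmg.mul (Real.measurable_exp.comp hmψ)) hbge
  have hBd : |B - B'| ≤ M * T := key _ (Real.measurable_exp.comp hmψ) hbe
  -- algebra
  have hsplit : A / B - A' / B' = (A - A') / B + A' * (B' - B) / (B * B') := by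
    field_simp
    ring
  have hbound : |A / B - A' / B'| ≤ |A - A'| / B + |B - B'| / B := by
    rw [hsplit]
    calc |(A - A') / B + A' * (B' - B) / (B * B')|
        ≤ |(A - A') / B| + |A' * (B' - B) / (B * B')| := abs_add_le _ _
      _ = |A - A'| / B + |A'| * |B' - B| / (B * B') := by
          rw [abs_div, abs_of_pos hBpos, abs_div, abs_mul, abs_of_pos (mul_pos hBpos hB'pos)]
      _ ≤ |A - A'| / B + B' * |B - B'| / (B * B') := by
          rw [abs_sub_comm B' B]
          gcongr
      _ = |A - A'| / B + |B - B'| / B := by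
          have h1 := hBpos.ne'
          have h2 := hB'pos.ne'
          field_simp
  have hexpsub : Real.exp ((⨆ x, ψ x) - ⨅ x, ψ x) = M / m := by
    rw [Real.exp_sub]
  calc |A / B - A' / B'| ≤ |A - A'| / B + |B - B'| / B := hbound
    _ ≤ M * T / B + M * T / B := by gcongr
    _ = 2 * (M * T) / B := by ring
    _ ≤ 2 * (M * T) / m := by
        gcongr
    _ = 2 * Real.exp ((⨆ x, ψ x) - ⨅ x, ψ x) * T := by
        rw [hexpsub]; field_simp
end

section
/- Let q ≥ 2 be an integer and let m ≥ 0 be an integer. Define the Legendre polynomial of degree n in dimension q for s ∈ (−1,1) by Rodrigues' formula P_n(q,s) = ((−1)^n · Γ((q−1)/2) / (2^n · Γ(n + (q−1)/2))) · (1 − s²)^{(3−q)/2} · (d/ds)^n [ (1 − s²)^{n + (q−3)/2} ]. Then ∫_{−1}^{0} P_{2m+1}(q,s) · (1 − s²)^{(q−3)/2} ds = (−1)^m · ∏_{i=0}^{m} ( (2i − 1) / (q + 2i − 1) ). -/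
open MeasureTheory Real intervalIntegral

/-- The Legendre polynomial of degree `n` in dimension `q`, given by the Rodrigues formula
`P_n(q,s) = ((−1)^n Γ((q−1)/2) / (2^n Γ(n+(q−1)/2))) (1−s²)^{(3−q)/2}
            (d/ds)^n [(1−s²)^{n+(q−3)/2}]`. -/
noncomputable def legendreP (q n : ℕ) (s : ℝ) : ℝ :=
  ((-1 : ℝ) ^ n * Real.Gamma (((q : ℝ) - 1) / 2)
      / (2 ^ n * Real.Gamma ((n : ℝ) + ((q : ℝ) - 1) / 2)))
    * (1 - s ^ 2) ^ (((3 : ℝ) - (q : ℝ)) / 2)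
    * iteratedDeriv n (fun x : ℝ => (1 - x ^ 2) ^ ((n : ℝ) + ((q : ℝ) - 3) / 2)) s

noncomputable def aF (x : ℝ) : ℕ → ℝ := fun k => ∏ j ∈ Finset.range k, (x - j)

lemma aF_zero (x : ℝ) : aF x 0 = 1 := by simp [aF]

lemma aF_succ (x : ℝ) (k : ℕ) : aF x (k+1) = aF x k * (x - k) := by
  simp [aF, Finset.prod_range_succ]

lemma aF_succ' (x : ℝ) (k : ℕ) : aF x (k+1) = x * aF (x-1) k := by
  rw [aF, Finset.prod_range_succ']
  simp only [Nat.cast_zero, sub_zero, aF]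
  rw [mul_comm]
  congr 1
  exact Finset.prod_congr rfl fun j _ => by push_cast; ring

lemma aF_shift (x : ℝ) (r : ℕ) : aF x r = aF (x-1) r + r * aF (x-1) (r-1) := by
  cases r with
  | zero => simp [aF_zero]
  | succ n =>
    rw [aF_succ', aF_succ]
    push_cast
    ring

noncomputable def TT (x : ℝ) (n : ℕ) : ℝ :=
  ∑ k ∈ Finset.range (n+1), (-1:ℝ)^k * (n.choose k) * aF x k * aF x (n-k)

lemma TT_zero (x : ℝ) : TT x 0 = 1 := by simp [TT, aF_zero]

lemma neg_one_pow_sub {n k : ℕ} (hk : k ≤ n) (hn : Odd n) :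
    (-1:ℝ)^(n-k) = -(-1:ℝ)^k := by
  have h : (-1:ℝ)^(n-k) * (-1:ℝ)^k = (-1:ℝ)^n := by
    rw [← pow_add, Nat.sub_add_cancel hk]
  have hn' : (-1:ℝ)^n = -1 := hn.neg_one_pow
  rcases Nat.even_or_odd k with he | ho
  · rw [he.neg_one_pow] at h ⊢
    simpa [hn'] using h
  · rw [ho.neg_one_pow] at h ⊢
    simpa [hn'] using h

lemma TT_odd (x : ℝ) (m : ℕ) : TT x (2*m+1) = 0 := by
  set n := 2*m+1 with hn
  have hodd : Odd n := ⟨m, by omega⟩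
  have key : TT x n = - TT x n := by
    conv_lhs => rw [TT, ← Finset.sum_range_reflect]
    rw [TT, ← Finset.sum_neg_distrib]
    refine Finset.sum_congr rfl fun k hk => ?_
    have hk' : k ≤ n := by simp at hk; omega
    have h1 : n + 1 - 1 - k = n - k := by omega
    rw [h1, Nat.choose_symm hk', Nat.sub_sub_self hk', neg_one_pow_sub hk' hodd]
    ring
  linarith

lemma pascal_sum (n : ℕ) (Z : ℕ → ℝ) :
    ∑ k ∈ Finset.range (n+2), ((n+1).choose k : ℝ) * Z k
      = ∑ k ∈ Finset.range (n+1), (n.choose k : ℝ) * (Z k + Z (k+1)) := by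
  rw [Finset.sum_range_succ' (fun k => ((n+1).choose k : ℝ) * Z k) (n+1)]
  have h1 : ∀ j, ((n+1).choose (j+1) : ℝ) = (n.choose j : ℝ) + (n.choose (j+1) : ℝ) := by
    intro j; rw [Nat.choose_succ_succ]; push_cast; ring
  have h2 : ∑ j ∈ Finset.range (n+1), ((n+1).choose (j+1) : ℝ) * Z (j+1)
      = ∑ j ∈ Finset.range (n+1), (n.choose j : ℝ) * Z (j+1)
        + ∑ j ∈ Finset.range (n+1), (n.choose (j+1) : ℝ) * Z (j+1) := by
    rw [← Finset.sum_add_distrib]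
    exact Finset.sum_congr rfl fun j _ => by rw [h1]; ring
  rw [h2]
  have h3 : ∑ j ∈ Finset.range (n+1), (n.choose (j+1) : ℝ) * Z (j+1)
        + ((n+1).choose 0 : ℝ) * Z 0
      = ∑ k ∈ Finset.range (n+1), (n.choose k : ℝ) * Z k := by
    have e0 : (((n+1).choose 0 : ℕ) : ℝ) = ((n.choose 0 : ℕ) : ℝ) := by simp
    rw [e0, ← Finset.sum_range_succ' (fun k => (n.choose k : ℝ) * Z k) (n+1),
      Finset.sum_range_succ]
    simp [Nat.choose_succ_self]
  rw [add_assoc, h3, ← Finset.sum_add_distrib]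
  exact Finset.sum_congr rfl fun k _ => by ring

lemma TT_rec (x : ℝ) (m : ℕ) :
    TT x (2*m+2) = -2*(2*m+1)*x*TT (x-1) (2*m) := by
  set n := 2*m+1 with hn
  set N := 2*m with hN
  -- Step A: Pascal
  have stepA : TT x (n+1) = ∑ k ∈ Finset.range (n+1), (n.choose k : ℝ) *
      (((-1:ℝ)^k * aF x k * aF x (n+1-k)) + ((-1:ℝ)^(k+1) * aF x (k+1) * aF x (n-k))) := by
    have := pascal_sum n (fun k => (-1:ℝ)^k * aF x k * aF x (n+1-k))
    rw [TT]
    rw [show (n+1)+1 = n+2 from rfl]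
    rw [show (∑ k ∈ Finset.range (n+2), (-1:ℝ)^k * ((n+1).choose k) * aF x k * aF x (n+1-k))
        = ∑ k ∈ Finset.range (n+2), ((n+1).choose k : ℝ) * ((-1:ℝ)^k * aF x k * aF x (n+1-k))
      from Finset.sum_congr rfl fun k _ => by ring, this]
    refine Finset.sum_congr rfl fun k hk => ?_
    have hk' : k ≤ n := by simp at hk; omega
    have : n + 1 - (k+1) = n - k := by omega
    rw [this]
  -- Step B: combine
  have stepB : TT x (n+1) = ∑ k ∈ Finset.range (n+1),
      (-1:ℝ)^k * (n.choose k : ℝ) * aF x k * aF x (n-k) * ((k:ℝ) - ((n-k : ℕ):ℝ)) := by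
    rw [stepA]
    refine Finset.sum_congr rfl fun k hk => ?_
    have hk' : k ≤ n := by simp at hk; omega
    have e1 : n + 1 - k = (n-k) + 1 := by omega
    rw [e1, aF_succ, aF_succ, pow_succ]
    ring
  -- split into S1 and S2
  set S1 : ℝ := ∑ k ∈ Finset.range (n+1),
      (-1:ℝ)^k * (n.choose k : ℝ) * ((k:ℝ)) * aF x k * aF x (n-k) with hS1
  have stepC : TT x (n+1) = 2 * S1 := by
    have hS2 : ∑ k ∈ Finset.range (n+1),
        (-1:ℝ)^k * (n.choose k : ℝ) * ((n-k : ℕ):ℝ) * aF x k * aF x (n-k) = - S1 := by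
      conv_lhs => rw [← Finset.sum_range_reflect]
      rw [hS1, ← Finset.sum_neg_distrib]
      refine Finset.sum_congr rfl fun k hk => ?_
      have hk' : k ≤ n := by simp at hk; omega
      have h1 : n + 1 - 1 - k = n - k := by omega
      rw [h1, Nat.choose_symm hk', Nat.sub_sub_self hk',
        neg_one_pow_sub hk' ⟨m, by omega⟩]
      ring
    rw [stepB]
    have : ∑ k ∈ Finset.range (n+1),
        (-1:ℝ)^k * (n.choose k : ℝ) * aF x k * aF x (n-k) * ((k:ℝ) - ((n-k : ℕ):ℝ))
      = S1 - (- S1) := by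
      rw [← hS2, hS1, ← Finset.sum_sub_distrib]
      exact Finset.sum_congr rfl fun k _ => by ring
    rw [this]; ring
  -- Step D: peel k = 0
  have stepD : S1 = -((N:ℝ)+1) * ∑ j ∈ Finset.range (N+1),
      (-1:ℝ)^j * (N.choose j : ℝ) * aF x (j+1) * aF x (N-j) := by
    rw [hS1, Finset.sum_range_succ'
      (fun k => (-1:ℝ)^k * (n.choose k : ℝ) * ((k:ℝ)) * aF x k * aF x (n-k)) n]
    rw [Finset.mul_sum]
    have hnN : n = N + 1 := by omega
    rw [show (Finset.range n) = Finset.range (N+1) from by rw [hnN]]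
    simp only [Nat.cast_zero, mul_zero, zero_mul, add_zero]
    refine Finset.sum_congr rfl fun j hj => ?_
    have hchoose : ((n.choose (j+1) : ℝ)) * ((j:ℝ)+1) = ((N:ℝ)+1) * (N.choose j : ℝ) := by
      have := Nat.add_one_mul_choose_eq N j
      have : ((N+1) * N.choose j : ℕ) = ((N+1).choose (j+1) * (j+1) : ℕ) := this
      have h := congrArg (fun t : ℕ => (t : ℝ)) this
      push_cast at h
      rw [hnN]; push_cast; linarith [h]
    have e2 : n - (j+1) = N - j := by omega
    rw [e2]
    push_cast
    linear_combination (-((-1:ℝ)^j * aF x (j+1) * aF x (N-j))) * hchoose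
  -- Step F: U = 0
  have hU : ∑ j ∈ Finset.range (N+1),
      (-1:ℝ)^j * (N.choose j : ℝ) * ((N-j : ℕ):ℝ) * aF (x-1) j * aF (x-1) (N-1-j) = 0 := by
    rcases Nat.eq_zero_or_pos m with hm | hm
    · have hN0 : N = 0 := by omega
      rw [hN0]
      simp
    · have hM : N = (N-1) + 1 := by omega
      set M := N - 1 with hMdef
      have hMo : M = 2*(m-1)+1 := by omega
      have key : ∀ j ∈ Finset.range (N+1),
          (-1:ℝ)^j * (N.choose j : ℝ) * ((N-j : ℕ):ℝ) * aF (x-1) j * aF (x-1) (N-1-j)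
          = ((M:ℝ)+1) * ((-1:ℝ)^j * (M.choose j : ℝ) * aF (x-1) j * aF (x-1) (M-j)) := by
        intro j hj
        have hid : N.choose j * (N - j) = (M+1) * M.choose j := by
          rw [hM, ← Nat.choose_succ_right_eq, Nat.add_one_mul_choose_eq]
        have h := congrArg (fun t : ℕ => (t : ℝ)) hid
        push_cast at h
        have e3 : N - 1 - j = M - j := by omega
        rw [e3]
        linear_combination ((-1:ℝ)^j * aF (x-1) j * aF (x-1) (M-j)) * h
      rw [Finset.sum_congr rfl key, ← Finset.mul_sum]
      have : ∑ j ∈ Finset.range (N+1), (-1:ℝ)^j * (M.choose j : ℝ) * aF (x-1) j * aF (x-1) (M-j)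
          = TT (x-1) M := by
        rw [show N + 1 = (M+1) + 1 from by omega, Finset.sum_range_succ,
          Nat.choose_succ_self, TT]
        simp
      rw [this, hMo, TT_odd, mul_zero]
  -- Step E
  have stepE : ∑ j ∈ Finset.range (N+1), (-1:ℝ)^j * (N.choose j : ℝ) * aF x (j+1) * aF x (N-j)
      = x * TT (x-1) N := by
    have expand : ∀ j ∈ Finset.range (N+1), (-1:ℝ)^j * (N.choose j : ℝ) * aF x (j+1) * aF x (N-j)
        = x * ((-1:ℝ)^j * (N.choose j : ℝ) * aF (x-1) j * aF (x-1) (N-j))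
          + x * ((-1:ℝ)^j * (N.choose j : ℝ) * ((N-j:ℕ):ℝ) * aF (x-1) j * aF (x-1) (N-1-j)) := by
      intro j hj
      rw [aF_succ', aF_shift x (N-j)]
      have e4 : N - j - 1 = N - 1 - j := by omega
      rw [e4]; ring
    rw [Finset.sum_congr rfl expand, Finset.sum_add_distrib, ← Finset.mul_sum, ← Finset.mul_sum,
      hU, mul_zero, add_zero, TT]
  have hfin : TT x (n+1) = -2*(2*(m:ℝ)+1)*x*TT (x-1) N := by
    rw [stepC, stepD, stepE]
    have hNc : ((N:ℕ):ℝ) = 2*(m:ℝ) := by rw [hN]; push_cast; ring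
    rw [hNc]; ring
  rw [show 2*m+2 = n+1 from by omega]
  exact hfin

lemma TT_even (m : ℕ) (x : ℝ) :
    TT x (2*m) = (-2:ℝ)^m * (∏ j ∈ Finset.range m, (2*(j:ℝ)+1)) * aF x m := by
  induction m generalizing x with
  | zero => simp [TT_zero, aF_zero]
  | succ p ih =>
    have h1 : 2*(p+1) = 2*p+2 := by omega
    rw [h1, TT_rec, ih, Finset.prod_range_succ, pow_succ, aF_succ']
    push_cast
    ring

open Real

noncomputable def FF (α : ℝ) (n : ℕ) (x : ℝ) : ℝ :=
  ∑ k ∈ Finset.range (n+1),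
    (-1:ℝ)^k * (n.choose k : ℝ) * aF α k * aF α (n-k)
      * (1-x) ^ (α - k) * (1+x) ^ (α - n + k)

lemma hasDerivAt_FF (α : ℝ) (n : ℕ) {x : ℝ} (h1 : -1 < x) (h2 : x < 1) :
    HasDerivAt (FF α n) (FF α (n+1) x) x := by
  have hx1 : (0:ℝ) < 1 - x := by linarith
  have hx2 : (0:ℝ) < 1 + x := by linarith
  -- derivative of each term
  have hterm : ∀ k ∈ Finset.range (n+1), HasDerivAt
      (fun y => (-1:ℝ)^k * (n.choose k : ℝ) * aF α k * aF α (n-k)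
        * (1-y) ^ (α - k) * (1+y) ^ (α - n + k))
      (((-1:ℝ)^k * (n.choose k : ℝ) * aF α k * aF α (n-k)
          * ((-1) * (α - k) * (1-x) ^ (α - k - 1))) * (1+x) ^ (α - n + k)
        + ((-1:ℝ)^k * (n.choose k : ℝ) * aF α k * aF α (n-k) * (1-x) ^ (α - k))
          * (1 * (α - n + k) * (1+x) ^ (α - n + k - 1))) x := by
    intro k _
    have d1 : HasDerivAt (fun y : ℝ => (1-y) ^ (α - k))
        ((-1) * (α - k) * (1-x) ^ (α - k - 1)) x :=
      ((hasDerivAt_id x).const_sub 1).rpow_const (Or.inl hx1.ne')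
    have d2 : HasDerivAt (fun y : ℝ => (1+y) ^ (α - n + k))
        (1 * (α - n + k) * (1+x) ^ (α - n + k - 1)) x :=
      ((hasDerivAt_id x).const_add 1).rpow_const (Or.inl hx2.ne')
    exact (d1.const_mul _).mul d2
  have hsum := HasDerivAt.fun_sum hterm
  convert hsum using 1
  case e'_4 => rfl
  case e'_5 => rfl
  case e'_8 => rfl
  -- now prove FF α (n+1) x equals the sum of derivatives
  have key : FF α (n+1) x = ∑ k ∈ Finset.range (n+2), ((n+1).choose k : ℝ) *
      ((-1:ℝ)^k * aF α k * aF α (n+1-k) * (1-x) ^ (α - k) * (1+x) ^ (α - (n+1) + k)) := by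
    rw [FF]
    refine Finset.sum_congr rfl fun k _ => ?_
    push_cast
    ring
  rw [key, pascal_sum]
  refine Finset.sum_congr rfl fun k hk => ?_
  have hk' : k ≤ n := by simp at hk; omega
  have e1 : n + 1 - k = (n-k) + 1 := by omega
  have e2 : n + 1 - (k+1) = n - k := by omega
  have ec : ((n-k : ℕ) : ℝ) = (n:ℝ) - k := by
    push_cast [hk']; ring
  have ex1 : α - ((n:ℝ)+1) + k = α - n + k - 1 := by ring
  have ex2 : α - ((n:ℝ)+1) + (k+1) = α - n + k := by ring
  have ex3 : α - ((k:ℝ)+1) = α - k - 1 := by ring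
  rw [e1, e2, aF_succ, aF_succ]
  push_cast
  rw [ex1, ex2, ex3, pow_succ, ec]
  ring

lemma FF_zero_eq (α : ℝ) {x : ℝ} (h1 : -1 < x) (h2 : x < 1) :
    (1 - x^2) ^ α = FF α 0 x := by
  have hx1 : (0:ℝ) ≤ 1 - x := by linarith
  have hx2 : (0:ℝ) ≤ 1 + x := by linarith
  have : (1 : ℝ) - x^2 = (1-x) * (1+x) := by ring
  rw [this, Real.mul_rpow hx1 hx2, FF]
  simp [aF_zero]

lemma iteratedDeriv_eq_FF (α : ℝ) (n : ℕ) {x : ℝ} (h1 : -1 < x) (h2 : x < 1) :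
    iteratedDeriv n (fun y : ℝ => (1 - y^2) ^ α) x = FF α n x := by
  induction n generalizing x with
  | zero => simpa [iteratedDeriv_zero] using FF_zero_eq α h1 h2
  | succ p ih =>
    rw [iteratedDeriv_succ]
    have hev : iteratedDeriv p (fun y : ℝ => (1 - y^2) ^ α) =ᶠ[nhds x] FF α p := by
      filter_upwards [Ioo_mem_nhds h1 h2] with y hy
      exact ih hy.1 hy.2
    rw [hev.deriv_eq, (hasDerivAt_FF α p h1 h2).deriv]

lemma FF_continuous (α : ℝ) (n : ℕ) (hα : (n:ℝ) ≤ α) : Continuous (FF α n) := by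
  refine continuous_finset_sum _ fun k hk => ?_
  have hk' : k ≤ n := by simp at hk; omega
  have c1 : Continuous (fun y : ℝ => (1-y) ^ (α - k)) := by
    have he : (0:ℝ) ≤ α - k := by
      have : (k:ℝ) ≤ n := by exact_mod_cast hk'
      linarith
    exact (Real.continuous_rpow_const he).comp (continuous_const.sub continuous_id)
  have c2 : Continuous (fun y : ℝ => (1+y) ^ (α - n + k)) := by
    have he : (0:ℝ) ≤ α - n + k := by
      have : (0:ℝ) ≤ (k:ℝ) := by positivity
      linarith
    exact (Real.continuous_rpow_const he).comp (continuous_const.add continuous_id)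
  exact (continuous_const.mul c1).mul c2

lemma FF_neg_one (α : ℝ) (n : ℕ) (hα : (n:ℝ) < α) : FF α n (-1) = 0 := by
  rw [FF]
  refine Finset.sum_eq_zero fun k hk => ?_
  have he : (0:ℝ) < α - n + k := by
    have : (0:ℝ) ≤ (k:ℝ) := by positivity
    linarith
  have : (1:ℝ) + (-1) = 0 := by norm_num
  rw [this, Real.zero_rpow he.ne', mul_zero]

lemma FF_zero_val (α : ℝ) (n : ℕ) : FF α n 0 = TT α n := by
  rw [FF, TT]
  refine Finset.sum_congr rfl fun k _ => ?_
  norm_num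

lemma FF_integrable (α : ℝ) (n : ℕ) (hα : (n:ℝ) - 1 < α) :
    IntervalIntegrable (FF α n) MeasureTheory.volume (-1) 0 := by
  have hFF : FF α n = ∑ k ∈ Finset.range (n+1), (fun x =>
      ((-1:ℝ)^k * (n.choose k : ℝ) * aF α k * aF α (n-k) * (1-x) ^ (α - k))
        * (1+x) ^ (α - n + k)) := by
    funext x
    rw [FF, Finset.sum_apply]
  rw [hFF]
  refine IntervalIntegrable.sum _ fun k hk => ?_
  have hγ : (-1:ℝ) < α - n + k := by
    have : (0:ℝ) ≤ (k:ℝ) := by positivity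
    linarith
  have h1 : IntervalIntegrable (fun y : ℝ => y ^ (α - n + k))
      MeasureTheory.volume 0 1 := intervalIntegral.intervalIntegrable_rpow' hγ
  have h2 := h1.comp_sub_right (-1)
  simp only [sub_neg_eq_add] at h2
  norm_num at h2
  have h2' : IntervalIntegrable (fun y : ℝ => (1 + y) ^ (α - n + k))
      MeasureTheory.volume (-1) 0 := by
    simpa [add_comm] using h2
  have hcont : ContinuousOn
      (fun y : ℝ => (-1:ℝ)^k * (n.choose k : ℝ) * aF α k * aF α (n-k) * (1-y) ^ (α - k))
      (Set.uIcc (-1:ℝ) 0) := by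
    intro y hy
    have hy' : y ≤ 0 := by
      rcases Set.mem_uIcc.1 hy with h | h
      · exact h.2
      · linarith [h.1]
    have hne : (1:ℝ) - y ≠ 0 := by nlinarith
    refine ContinuousAt.continuousWithinAt ?_
    exact ContinuousAt.mul continuousAt_const
      (((continuous_const.sub continuous_id).continuousAt).rpow_const (Or.inl hne))
  exact h2'.continuousOn_mul hcont


lemma FF_FTC (α : ℝ) (n : ℕ) (hα : (n:ℝ) < α) :
    ∫ x in (-1:ℝ)..0, FF α (n+1) x = TT α n := by
  have h := intervalIntegral.integral_eq_sub_of_hasDeriv_right_of_le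
    (by norm_num : (-1:ℝ) ≤ 0)
    ((FF_continuous α n hα.le).continuousOn)
    (fun x hx => (hasDerivAt_FF α n hx.1 (by linarith [hx.2] : x < 1)).hasDerivWithinAt)
    (FF_integrable α (n+1) (by push_cast; linarith))
  rw [h, FF_zero_val, FF_neg_one α n hα, sub_zero]

lemma Gamma_add_nat {x : ℝ} (hx : 0 < x) (n : ℕ) :
    Real.Gamma (x + n) = (∏ j ∈ Finset.range n, (x + j)) * Real.Gamma x := by
  induction n with
  | zero => simp
  | succ p ih =>
    have h1 : x + ((p:ℝ)+1) = (x + p) + 1 := by ring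
    have hne : x + (p:ℝ) ≠ 0 := by positivity
    rw [show ((p+1:ℕ):ℝ) = (p:ℝ)+1 by push_cast; ring, h1, Real.Gamma_add_one hne, ih,
      Finset.prod_range_succ]
    ring


/-- Odd-degree Legendre integral (Lemma 5.5): for `q ≥ 2` and `m ≥ 0`,
`∫_{−1}^0 P_{2m+1}(q,s) (1−s²)^{(q−3)/2} ds = (−1)^m ∏_{i=0}^m (2i−1)/(q+2i−1)`. -/
theorem integral_legendreP_odd
    (q : ℕ) (hq : 2 ≤ q) (m : ℕ) :
    ∫ s in (-1 : ℝ)..0, legendreP q (2 * m + 1) s * (1 - s ^ 2) ^ (((q : ℝ) - 3) / 2)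
      = (-1 : ℝ) ^ m *
          ∏ i ∈ Finset.range (m + 1), ((2 * (i : ℝ) - 1) / ((q : ℝ) + 2 * (i : ℝ) - 1)) := by
  have hq2 : (2:ℝ) ≤ (q:ℝ) := by exact_mod_cast hq
  set β : ℝ := ((q:ℝ) - 1)/2 with hβ
  have hβpos : 0 < β := by rw [hβ]; linarith
  set n : ℕ := 2*m+1 with hn
  set α : ℝ := (n:ℝ) + ((q:ℝ)-3)/2 with hα
  have hαβ : α = 2*(m:ℝ) + β := by rw [hα, hβ, hn]; push_cast; ring
  set c : ℝ := ((-1:ℝ)^n * Real.Gamma (((q:ℝ) - 1)/2)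
      / (2^n * Real.Gamma ((n:ℝ) + ((q:ℝ) - 1)/2))) with hc
  -- pointwise identity on Ioc (-1) 0
  have hpt : ∀ s ∈ Set.Ioc (-1:ℝ) 0,
      legendreP q n s * (1 - s^2) ^ (((q:ℝ)-3)/2) = c * FF α n s := by
    intro s hs
    have hs1 : -1 < s := hs.1
    have hs2 : s < 1 := by linarith [hs.2]
    have hpos : 0 < 1 - s^2 := by nlinarith
    have hfun : (fun x : ℝ => (1 - x ^ 2) ^ ((n : ℝ) + ((q : ℝ) - 3) / 2))
        = (fun y : ℝ => (1 - y ^ 2) ^ α) := by rw [hα]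
    rw [legendreP, hfun, iteratedDeriv_eq_FF α n hs1 hs2]
    have hmul : (1 - s^2) ^ (((3:ℝ)-(q:ℝ))/2) * (1 - s^2) ^ (((q:ℝ)-3)/2) = 1 := by
      rw [← Real.rpow_add hpos, show ((3:ℝ)-(q:ℝ))/2 + ((q:ℝ)-3)/2 = 0 by ring,
        Real.rpow_zero]
    calc c * (1 - s^2) ^ (((3:ℝ)-(q:ℝ))/2) * FF α n s * (1 - s^2) ^ (((q:ℝ)-3)/2)
        = c * ((1 - s^2) ^ (((3:ℝ)-(q:ℝ))/2) * (1 - s^2) ^ (((q:ℝ)-3)/2)) * FF α n s := by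
          ring
      _ = c * FF α n s := by rw [hmul]; ring
  have hint : ∫ s in (-1:ℝ)..0, legendreP q n s * (1 - s^2) ^ (((q:ℝ)-3)/2)
      = ∫ s in (-1:ℝ)..0, c * FF α n s := by
    refine intervalIntegral.integral_congr_ae ?_
    filter_upwards with s hs
    have hs' : s ∈ Set.Ioc (-1:ℝ) 0 := by
      rwa [Set.uIoc_of_le (by norm_num : (-1:ℝ) ≤ 0)] at hs
    exact hpt s hs'
  rw [hint, intervalIntegral.integral_const_mul]
  have h2m : ((2*m : ℕ):ℝ) < α := by rw [hαβ]; push_cast; linarith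
  have hFTC : ∫ s in (-1:ℝ)..0, FF α n s = TT α (2*m) := by
    rw [hn]
    exact FF_FTC α (2*m) h2m
  rw [hFTC, TT_even]
  -- Gamma computation
  have hGamma : Real.Gamma ((n:ℝ) + ((q:ℝ)-1)/2)
      = (∏ j ∈ Finset.range (2*m+1), (β + (j:ℝ))) * Real.Gamma β := by
    rw [show (n:ℝ) + ((q:ℝ)-1)/2 = β + ((2*m+1 : ℕ):ℝ) by rw [hβ, hn]; push_cast; ring]
    exact Gamma_add_nat hβpos (2*m+1)
  have hsplit : (∏ j ∈ Finset.range (2*m+1), (β + (j:ℝ)))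
      = (∏ j ∈ Finset.range (m+1), (β + (j:ℝ))) * ∏ i ∈ Finset.range m, (β + ((m:ℝ)+1+i)) := by
    rw [show 2*m+1 = (m+1) + m from by omega, Finset.prod_range_add]
    congr 1
    exact Finset.prod_congr rfl fun i _ => by push_cast; ring
  have haF : aF α m = ∏ i ∈ Finset.range m, (β + ((m:ℝ)+1+i)) := by
    rw [aF, ← Finset.prod_range_reflect (fun i => β + ((m:ℝ)+1+(i:ℝ))) m]
    refine Finset.prod_congr rfl fun j hj => ?_
    have hj' : j < m := Finset.mem_range.1 hj
    have hm1 : 1 + j ≤ m := by omega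
    have e : ((m - 1 - j : ℕ):ℝ) = (m:ℝ) - 1 - (j:ℝ) := by
      rw [show m - 1 - j = m - (1+j) from by omega, Nat.cast_sub hm1]
      push_cast; ring
    rw [e, hαβ]; ring
  have hOdd : ∏ i ∈ Finset.range (m+1), (2*(i:ℝ) - 1)
      = -(∏ j ∈ Finset.range m, (2*(j:ℝ)+1)) := by
    rw [Finset.prod_range_succ' (fun i => 2*(i:ℝ)-1) m]
    rw [show (∏ i ∈ Finset.range m, (2*((i+1:ℕ):ℝ)-1)) = ∏ i ∈ Finset.range m, (2*(i:ℝ)+1)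
      from Finset.prod_congr rfl fun i _ => by push_cast; ring]
    norm_num
  have hRHS : ∏ i ∈ Finset.range (m+1), ((2*(i:ℝ)-1) / ((q:ℝ) + 2*(i:ℝ) - 1))
      = (∏ i ∈ Finset.range (m+1), (2*(i:ℝ)-1))
        / ((2:ℝ)^(m+1) * ∏ i ∈ Finset.range (m+1), (β + (i:ℝ))) := by
    rw [Finset.prod_div_distrib]
    congr 1
    rw [show (∏ i ∈ Finset.range (m+1), ((q:ℝ) + 2*(i:ℝ) - 1))
        = ∏ i ∈ Finset.range (m+1), (2 * (β + (i:ℝ)))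
      from Finset.prod_congr rfl fun i _ => by rw [hβ]; ring]
    rw [Finset.prod_mul_distrib, Finset.prod_const, Finset.card_range]
  have hA : (0:ℝ) < ∏ i ∈ Finset.range (m+1), (β + (i:ℝ)) :=
    Finset.prod_pos fun i _ => by positivity
  have hB : (0:ℝ) < ∏ i ∈ Finset.range m, (β + ((m:ℝ)+1+(i:ℝ))) :=
    Finset.prod_pos fun i _ => by positivity
  have hΓ : Real.Gamma β ≠ 0 := (Real.Gamma_pos_of_pos hβpos).ne'
  have hcval : c = -(Real.Gamma β) / (2^(2*m+1) *
      ((∏ j ∈ Finset.range (m+1), (β + (j:ℝ)))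
        * (∏ i ∈ Finset.range m, (β + ((m:ℝ)+1+(i:ℝ)))) * Real.Gamma β)) := by
    rw [hc, hGamma, hsplit, hβ, hn]
    rw [show ((-1:ℝ)^(2*m+1)) = -1 from Odd.neg_one_pow ⟨m, by omega⟩]
    rw [hβ] at *
    ring
  rw [hcval, hRHS, hOdd, haF]
  have hneg2 : (-2:ℝ)^m = (-1:ℝ)^m * 2^m := by
    rw [← neg_one_mul, mul_pow]
  rw [hneg2]
  field_simp
  ring
end

section
/- Let r be a real number and m ≥ 0 an integer. Then the (2m)-th iterated derivative of the function s ↦ (1 − s²)^r, evaluated at s = 0, equals (−1)^m · ((2m)! / m!) · ∏_{i=0}^{m−1} (r − i). -/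
open Real

section IterAuxSect
open Set

namespace IterAux

noncomputable def g (r : ℝ) : ℝ → ℝ := fun s => (1 - s ^ 2) ^ r

lemma ne_zero' {x : ℝ} (hx : x ∈ Ioo (-1:ℝ) 1) : (1 : ℝ) - x ^ 2 ≠ 0 := by
  nlinarith [hx.1, hx.2]

lemma contDiffOn_g (r : ℝ) : ContDiffOn ℝ ((⊤:ℕ∞) : WithTop ℕ∞) (g r) (Ioo (-1:ℝ) 1) :=
  ContDiffOn.rpow_const_of_ne
    ((contDiff_const.sub (contDiff_id.pow 2)).contDiffOn) (fun x hx => ne_zero' hx)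

lemma contDiffOn_iteratedDeriv {f : ℝ → ℝ} {U : Set ℝ} (hU : IsOpen U)
    (hf : ContDiffOn ℝ ((⊤:ℕ∞) : WithTop ℕ∞) f U) (n : ℕ) :
    ContDiffOn ℝ ((⊤:ℕ∞) : WithTop ℕ∞) (iteratedDeriv n f) U := by
  induction n with
  | zero => simpa [iteratedDeriv_zero] using hf
  | succ n ih =>
    rw [iteratedDeriv_succ]
    exact ih.deriv_of_isOpen hU (by simp)

lemma diffAt_iteratedDeriv {f : ℝ → ℝ} {U : Set ℝ} (hU : IsOpen U)
    (hf : ContDiffOn ℝ ((⊤:ℕ∞) : WithTop ℕ∞) f U) (n : ℕ) {x : ℝ} (hx : x ∈ U) :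
    DifferentiableAt ℝ (iteratedDeriv n f) x :=
  (((contDiffOn_iteratedDeriv hU hf n).differentiableOn (by simp)) x hx).differentiableAt
    (hU.mem_nhds hx)

end IterAux

namespace IterAux

lemma iteratedDeriv_linear_mul {f : ℝ → ℝ} {U : Set ℝ} (hU : IsOpen U)
    (hf : ContDiffOn ℝ ((⊤:ℕ∞) : WithTop ℕ∞) f U) (c : ℝ) :
    ∀ (n : ℕ) {x : ℝ}, x ∈ U →
      iteratedDeriv n (fun s => c * s * f s) x
        = c * x * iteratedDeriv n f x + c * n * iteratedDeriv (n - 1) f x := by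
  intro n
  induction n with
  | zero => intro x hx; simp
  | succ n ih =>
    intro x hx
    have heq : Set.EqOn (iteratedDeriv n (fun s => c * s * f s))
        (fun y => c * y * iteratedDeriv n f y + c * n * iteratedDeriv (n - 1) f y) U :=
      fun y hy => ih hy
    have d1 : DifferentiableAt ℝ (iteratedDeriv n f) x := diffAt_iteratedDeriv hU hf n hx
    have d2 : DifferentiableAt ℝ (iteratedDeriv (n - 1) f) x :=
      diffAt_iteratedDeriv hU hf (n - 1) hx
    rw [iteratedDeriv_succ]
    rw [Filter.EventuallyEq.deriv_eq (Filter.eventuallyEq_of_mem (hU.mem_nhds hx) heq)]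
    rw [deriv_fun_add ((differentiableAt_fun_id.const_mul c).fun_mul d1) (d2.const_mul (c * ↑n))]
    rw [deriv_fun_mul (differentiableAt_fun_id.const_mul c) d1, deriv_const_mul _ d2]
    rw [deriv_const_mul _ differentiableAt_fun_id, deriv_id'']
    rw [← iteratedDeriv_succ]
    cases n with
    | zero => simp; ring
    | succ k =>
      have hk : k + 1 - 1 = k := rfl
      rw [hk, ← iteratedDeriv_succ]
      push_cast
      ring

lemma deriv_g {r : ℝ} {x : ℝ} (hx : x ∈ Ioo (-1:ℝ) 1) :
    deriv (g r) x = (-2 * r) * x * g (r - 1) x := by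
  have h : HasDerivAt (fun s : ℝ => 1 - s ^ 2) (-(2 * x)) x := by
    simpa using ((hasDerivAt_pow 2 x).const_sub 1)
  have h2 := h.rpow_const (p := r) (Or.inl (ne_zero' hx))
  rw [show g r = fun y : ℝ => (1 - y ^ 2) ^ r from rfl, h2.deriv]
  simp only [g]
  ring

lemma key (r : ℝ) (n : ℕ) :
    iteratedDeriv (n + 1) (g r) 0 = (-2 * r) * n * iteratedDeriv (n - 1) (g (r - 1)) 0 := by
  have h0 : (0:ℝ) ∈ Ioo (-1:ℝ) 1 := by norm_num
  rw [iteratedDeriv_succ']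
  have heq : Set.EqOn (deriv (g r)) (fun s => (-2 * r) * s * g (r - 1) s) (Ioo (-1:ℝ) 1) :=
    fun y hy => deriv_g hy
  rw [heq.iteratedDeriv_of_isOpen isOpen_Ioo n h0]
  rw [iteratedDeriv_linear_mul isOpen_Ioo (contDiffOn_g (r - 1)) (-2 * r) n h0]
  ring

end IterAux

namespace IterAux

lemma even_val (m : ℕ) : ∀ r : ℝ, iteratedDeriv (2 * m) (g r) 0
    = (-1 : ℝ) ^ m * ((Nat.factorial (2 * m) : ℝ) / (Nat.factorial m : ℝ))
        * ∏ i ∈ Finset.range m, (r - (i : ℝ)) := by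
  induction m with
  | zero =>
    intro r
    simp [g, Real.one_rpow]
  | succ m ih =>
    intro r
    have h2 : 2 * (m + 1) = (2 * m + 1) + 1 := by ring
    rw [h2, key r (2 * m + 1), show 2 * m + 1 - 1 = 2 * m from rfl, ih (r - 1)]
    have hprod : ∏ i ∈ Finset.range (m + 1), (r - (i : ℝ))
        = (∏ i ∈ Finset.range m, ((r - 1) - (i : ℝ))) * r := by
      rw [Finset.prod_range_succ']
      simp only [Nat.cast_zero, sub_zero]
      congr 1
      refine Finset.prod_congr rfl fun i _ => ?_
      push_cast
      ring
    rw [hprod]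
    have hfac : (Nat.factorial (2 * m + 1 + 1) : ℝ)
        = (2 * m + 2) * ((2 * m + 1) * (Nat.factorial (2 * m) : ℝ)) := by
      rw [Nat.factorial_succ, Nat.factorial_succ]
      push_cast
      ring
    have hfacm : (Nat.factorial (m + 1) : ℝ) = (m + 1) * (Nat.factorial m : ℝ) := by
      rw [Nat.factorial_succ]; push_cast; ring
    rw [hfac, hfacm]
    have hm : (Nat.factorial m : ℝ) ≠ 0 := Nat.cast_ne_zero.mpr (Nat.factorial_ne_zero m)
    have hm1 : (m : ℝ) + 1 ≠ 0 := by positivity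
    field_simp
    push_cast
    ring

end IterAux
end IterAuxSect

/-- Value at `0` of the `(2m)`-th derivative of `s ↦ (1−s²)^r`:
`(d/ds)^{2m} (1−s²)^r |_{s=0} = (−1)^m ((2m)!/m!) ∏_{i=0}^{m−1} (r−i)`. -/
theorem iteratedDeriv_one_sub_sq_rpow_at_zero
    (r : ℝ) (m : ℕ) :
    iteratedDeriv (2 * m) (fun s : ℝ => (1 - s ^ 2) ^ r) 0
      = (-1 : ℝ) ^ m * ((Nat.factorial (2 * m) : ℝ) / (Nat.factorial m : ℝ))
          * ∏ i ∈ Finset.range m, (r - (i : ℝ)) := by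
  exact IterAux.even_val m r
end
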